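/- arXiv:1302.3940 — 5 statements merged into one kernel-verified Lean document; each statement's English description precedes it below -/
import Mathlib

section
/- If X is a synchronized system with infinitely many points and φ is a flip for (X, σ_X), then at least one of the two sets A(φ) and A(σ_X∘φ) is non-empty. -/
open Set Function

/-- The map `x ↦ σᵐ(x)` on the full shift `A^ℤ`, where `σᵐ(x)_i = x_{i+m}`. -/
def shiftZ (A : Type*) (m : ℤ) : (ℤ → A) → ℤ → A := fun x i => x (i + m)

/-- The shift map `σ` on the full shift `A^ℤ`: `σ(x)_i = x_{i+1}`. -/
abbrev shiftMap (A : Type*) : (ℤ → A) → ℤ → A := shiftZ A 1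

/-- The inverse shift map `σ⁻¹`: `σ⁻¹(x)_i = x_{i-1}`. -/
abbrev shiftInv (A : Type*) : (ℤ → A) → ℤ → A := shiftZ A (-1)

/-- The reversal map `ρ`: `ρ(x)_i = x_{-i}`. -/
def revMap (A : Type*) : (ℤ → A) → ℤ → A := fun x i => x (-i)

/-- A shift space over `A`: a nonempty closed subset of `A^ℤ` with `σ(X) = X`. -/
def IsShiftSpace {A : Type*} [TopologicalSpace A] (X : Set (ℤ → A)) : Prop :=
  X.Nonempty ∧ IsClosed X ∧ shiftMap A '' X = X

/-- The word `w` occurs in `x` at position `i`, i.e. `x_{[i, i+|w|-1]} = w`. -/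
def OccursAt {A : Type*} (w : List A) (x : ℤ → A) (i : ℤ) : Prop :=
  ∀ k : Fin w.length, x (i + (k : ℕ)) = w.get k

/-- `w` is a block of `X`: it occurs in some point of `X`. -/
def IsBlockOf {A : Type*} (X : Set (ℤ → A)) (w : List A) : Prop :=
  ∃ x ∈ X, ∃ i : ℤ, OccursAt w x i

/-- `X` is irreducible: any two blocks can be joined by a block. -/
def ShiftIrreducible {A : Type*} (X : Set (ℤ → A)) : Prop :=
  ∀ u v : List A, IsBlockOf X u → IsBlockOf X v → ∃ w : List A, IsBlockOf X (u ++ w ++ v)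

/-- `w` is a finitary (intrinsically synchronizing) block of `X`. -/
def IsFinitary {A : Type*} (X : Set (ℤ → A)) (w : List A) : Prop :=
  IsBlockOf X w ∧ ∀ u v : List A, IsBlockOf X (u ++ w) → IsBlockOf X (w ++ v) →
    IsBlockOf X (u ++ w ++ v)

/-- A synchronized system: an irreducible shift space with a finitary block. -/
def IsSynchronized {A : Type*} [TopologicalSpace A] (X : Set (ℤ → A)) : Prop :=
  IsShiftSpace X ∧ ShiftIrreducible X ∧ ∃ w : List A, IsFinitary X w

/-- `φ` (as a map of the ambient full shift) restricts to a flip for `(X, σ_X)`: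
a homeomorphism `X → X` with `φ ∘ φ = id` and `φ ∘ σ_X = σ_X⁻¹ ∘ φ`.
(Being a homeomorphism is automatic from continuity and `φ ∘ φ = id` on `X`.) -/
def IsFlip {A : Type*} [TopologicalSpace A] (X : Set (ℤ → A))
    (φ : (ℤ → A) → ℤ → A) : Prop :=
  MapsTo φ X X ∧ ContinuousOn φ X ∧ (∀ x ∈ X, φ (φ x) = x) ∧
    ∀ x ∈ X, φ (shiftMap A x) = shiftInv A (φ x)

/-- The shift-flip systems `(X, σ_X, φ)` and `(Y, σ_Y, ψ)` are conjugate: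
there is a homeomorphism `Φ : X → Y` with `Φ ∘ σ_X = σ_Y ∘ Φ` and `Φ ∘ φ = ψ ∘ Φ`. -/
def SystemConj {A B : Type*} [TopologicalSpace A] [TopologicalSpace B]
    (X : Set (ℤ → A)) (φ : (ℤ → A) → ℤ → A)
    (Y : Set (ℤ → B)) (ψ : (ℤ → B) → ℤ → B) : Prop :=
  ∃ (Φ : (ℤ → A) → ℤ → B) (Ψ : (ℤ → B) → ℤ → A),
    MapsTo Φ X Y ∧ ContinuousOn Φ X ∧ MapsTo Ψ Y X ∧ ContinuousOn Ψ Y ∧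
    InvOn Ψ Φ X Y ∧
    (∀ x ∈ X, Φ (shiftMap A x) = shiftMap B (Φ x)) ∧ ∀ x ∈ X, Φ (φ x) = ψ (Φ x)

/-- Two flips `φ, φ'` for `(X, σ_X)` are conjugate. -/
def FlipConj {A : Type*} [TopologicalSpace A] (X : Set (ℤ → A))
    (φ φ' : (ℤ → A) → ℤ → A) : Prop :=
  SystemConj X φ X φ'

/-- `F(φ; n) = {x ∈ X : σ_X^n(x) = x and φ(x) = x}`. -/
def flipFix {A : Type*} (X : Set (ℤ → A)) (φ : (ℤ → A) → ℤ → A) (n : ℕ) :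
    Set (ℤ → A) :=
  {x ∈ X | (shiftMap A)^[n] x = x ∧ φ x = x}

/-- `A(φ)`: points of `X` in which some finitary block occurs infinitely often and
which differ from their `φ`-image in at least one but only finitely many coordinates. -/
def flipAsym {A : Type*} (X : Set (ℤ → A)) (φ : (ℤ → A) → ℤ → A) :
    Set (ℤ → A) :=
  {x ∈ X | (∃ w : List A, IsFinitary X w ∧ {i : ℤ | OccursAt w x i}.Infinite) ∧
    {i : ℤ | φ x i ≠ x i}.Nonempty ∧ {i : ℤ | φ x i ≠ x i}.Finite}

/-- `x` is a bi-infinite concatenation of words from `C`. -/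
def IsConcat {A : Type*} (C : Set (List A)) (x : ℤ → A) : Prop :=
  ∃ t : ℤ → ℤ, StrictMono t ∧ (∀ n : ℤ, ∃ j : ℤ, t j ≤ n ∧ n < t (j + 1)) ∧
    ∀ j : ℤ, ∃ w ∈ C, t (j + 1) = t j + w.length ∧ OccursAt w x (t j)

/-- A coded system: a shift space in which the set of bi-infinite concatenations of
words from some code `C` is dense. -/
def IsCoded {A : Type*} [TopologicalSpace A] (X : Set (ℤ → A)) : Prop :=
  IsShiftSpace X ∧ ∃ C : Set (List A), closure {x | IsConcat C x} = X
namespace PropC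

variable {A : Type*}

/-! ### shiftZ algebra -/

theorem shiftZ_apply (m : ℤ) (x : ℤ → A) (i : ℤ) : shiftZ A m x i = x (i + m) := rfl

theorem shiftZ_shiftZ (m n : ℤ) (x : ℤ → A) :
    shiftZ A m (shiftZ A n x) = shiftZ A (n + m) x := by
  funext i; show x (i + m + n) = x (i + (n + m)); ring_nf

theorem shiftZ_zero (x : ℤ → A) : shiftZ A 0 x = x := by
  funext i; show x (i + 0) = x i; rw [add_zero]

theorem shiftMap_shiftZ (k : ℤ) (x : ℤ → A) :
    shiftMap A (shiftZ A k x) = shiftZ A (k + 1) x := shiftZ_shiftZ 1 k x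

/-! ### membership -/

theorem mem_shiftZ [TopologicalSpace A] {X : Set (ℤ → A)}
    (himg : shiftMap A '' X = X) (k : ℤ) {x : ℤ → A} (hx : x ∈ X) :
    shiftZ A k x ∈ X := by
  induction k using Int.induction_on with
  | zero => rwa [shiftZ_zero]
  | succ n ih => rw [← shiftMap_shiftZ, ← himg]; exact ⟨_, ih, rfl⟩
  | pred n ih =>
      have hmem : shiftZ A (-(n:ℤ)) x ∈ X := ih
      rw [← himg] at hmem
      obtain ⟨y, hy, hyx⟩ := hmem
      have : y = shiftZ A (-(n : ℤ) - 1) x := by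
        have h := congrArg (shiftZ A (-1)) hyx
        rw [show shiftMap A y = shiftZ A 1 y from rfl, shiftZ_shiftZ, shiftZ_shiftZ] at h
        norm_num [shiftZ_zero] at h
        rw [show (-(n:ℤ) - 1) = (-(n:ℤ) + -1) by ring]
        exact h
      rwa [← this]

/-! ### words and occurrences -/

/-- The word of `x` on `[i, i+n)`. -/
def word (x : ℤ → A) (i : ℤ) (n : ℕ) : List A :=
  List.ofFn fun k : Fin n => x (i + k)

@[simp] theorem word_length (x : ℤ → A) (i : ℤ) (n : ℕ) : (word x i n).length = n := by
  simp [word]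

theorem occursAt_iff {w : List A} {x : ℤ → A} {i : ℤ} :
    OccursAt w x i ↔ ∀ k : ℕ, (hk : k < w.length) → x (i + k) = w.get ⟨k, hk⟩ := by
  constructor
  · intro h k hk; exact h ⟨k, hk⟩
  · intro h k; exact h k k.2

theorem occursAt_word (x : ℤ → A) (i : ℤ) (n : ℕ) : OccursAt (word x i n) x i := by
  rw [occursAt_iff]
  intro k hk
  simp only [word_length] at hk
  simp [word, List.get_ofFn]

theorem word_eq_of_occursAt {w : List A} {x : ℤ → A} {i : ℤ} (h : OccursAt w x i) :
    word x i w.length = w := by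
  apply List.ext_get (by simp)
  intro k h1 h2
  simp only [word_length] at h1
  simp only [word, List.get_ofFn]
  exact h ⟨k, h2⟩

theorem eq_on_of_occursAt {w : List A} {x y : ℤ → A} {i : ℤ}
    (hx : OccursAt w x i) (hy : OccursAt w y i) {j : ℤ}
    (h1 : i ≤ j) (h2 : j < i + w.length) : x j = y j := by
  have h3 : (j - i).toNat < w.length := by omega
  have h4 : j = i + ((j - i).toNat : ℤ) := by omega
  rw [h4]
  rw [occursAt_iff] at hx hy
  rw [hx _ h3, hy _ h3]

theorem occursAt_congr {w : List A} {x y : ℤ → A} {i : ℤ}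
    (hx : OccursAt w x i) (h : ∀ j, i ≤ j → j < i + w.length → x j = y j) :
    OccursAt w y i := by
  rw [occursAt_iff] at hx ⊢
  intro k hk
  rw [← h (i + k) (by omega) (by omega)]
  exact hx k hk

theorem occursAt_shiftZ {w : List A} {x : ℤ → A} {i : ℤ} (h : OccursAt w x i) (m : ℤ) :
    OccursAt w (shiftZ A m x) (i - m) := by
  rw [occursAt_iff] at h ⊢
  intro k hk
  rw [shiftZ_apply, show i - m + k + m = i + k by ring]
  exact h k hk

theorem word_append (x : ℤ → A) (i : ℤ) (m n : ℕ) :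
    word x i (m + n) = word x i m ++ word x (i + m) n := by
  apply List.ext_getElem (by simp)
  intro k h1 h2
  simp only [word, List.getElem_ofFn, List.getElem_append]
  split
  · rfl
  · simp only [List.getElem_ofFn, List.length_ofFn] at *
    congr 1
    push_cast
    omega

theorem occursAt_append {u v : List A} {x : ℤ → A} {i : ℤ}
    (hu : OccursAt u x i) (hv : OccursAt v x (i + u.length)) :
    OccursAt (u ++ v) x i := by
  rw [occursAt_iff] at hu hv ⊢
  intro k hk
  simp only [List.length_append] at hk
  simp only [List.get_eq_getElem, List.getElem_append] at *
  split
  · next h => exact hu k h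
  · next h =>
    have := hv (k - u.length) (by omega)
    rw [← this]
    congr 1
    push_cast
    omega

theorem occursAt_append_right {u v : List A} {x : ℤ → A} {i : ℤ}
    (h : OccursAt (u ++ v) x i) : OccursAt v x (i + u.length) := by
  rw [occursAt_iff] at h ⊢
  intro k hk
  have h2 := h (u.length + k) (by simp; omega)
  simp only [List.get_eq_getElem, List.getElem_append] at h2 ⊢
  rw [dif_neg (by omega)] at h2
  simp only [Nat.add_sub_cancel_left] at h2
  rw [← h2]
  · congr 1
    push_cast
    ring


theorem occursAt_append_left {u v : List A} {x : ℤ → A} {i : ℤ}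
    (h : OccursAt (u ++ v) x i) : OccursAt u x i := by
  rw [occursAt_iff] at h ⊢
  intro k hk
  have h2 := h k (by simp; omega)
  simp only [List.get_eq_getElem, List.getElem_append] at h2 ⊢
  rw [dif_pos hk] at h2
  exact h2

theorem isBlockOf_word [TopologicalSpace A] {X : Set (ℤ → A)} {x : ℤ → A} (hx : x ∈ X)
    (i : ℤ) (n : ℕ) : IsBlockOf X (word x i n) :=
  ⟨x, hx, i, occursAt_word x i n⟩

/-! ### flips -/

section Flip
variable [TopologicalSpace A] {X : Set (ℤ → A)} {ψ : (ℤ → A) → ℤ → A}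

theorem flip_shiftZ (himg : shiftMap A '' X = X) (hψ : IsFlip X ψ) (k : ℤ)
    {x : ℤ → A} (hx : x ∈ X) : ψ (shiftZ A k x) = shiftZ A (-k) (ψ x) := by
  obtain ⟨hmap, hcont, hinv, hcomm⟩ := hψ
  have key : ∀ y ∈ X, ψ (shiftZ A 1 y) = shiftZ A (-1) (ψ y) := fun y hy => hcomm y hy
  have keyneg : ∀ y ∈ X, ψ (shiftZ A (-1) y) = shiftZ A 1 (ψ y) := by
    intro y hy
    have h1 : shiftZ A (-1) y ∈ X := mem_shiftZ himg (-1) hy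
    have h2 := key _ h1
    rw [shiftZ_shiftZ] at h2
    norm_num [shiftZ_zero] at h2
    rw [h2, shiftZ_shiftZ]
    norm_num [shiftZ_zero]
  induction k using Int.induction_on with
  | zero => rw [shiftZ_zero, neg_zero, shiftZ_zero]
  | succ n ih =>
      have h1 : shiftZ A (n : ℤ) x ∈ X := mem_shiftZ himg _ hx
      have h2 := key _ h1
      rw [shiftZ_shiftZ, ih, shiftZ_shiftZ] at h2
      rw [h2]
      congr 1
      ring
  | pred n ih =>
      have h1 : shiftZ A (-(n : ℤ)) x ∈ X := mem_shiftZ himg _ hx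
      have h2 := keyneg _ h1
      rw [shiftZ_shiftZ, ih, shiftZ_shiftZ] at h2
      rw [show (-(n : ℤ) - 1) = (-(n:ℤ)) + -1 from by ring, h2]
      congr 1
      ring

theorem isFlip_shift_comp (himg : shiftMap A '' X = X) (hψ : IsFlip X ψ) :
    IsFlip X (shiftMap A ∘ ψ) := by
  obtain ⟨hmap, hcont, hinv, hcomm⟩ := hψ
  have hσcont : Continuous (shiftMap A) := by
    apply continuous_pi
    intro i
    exact continuous_apply (i + 1)
  refine ⟨?_, ?_, ?_, ?_⟩
  · intro x hx
    exact mem_shiftZ himg 1 (hmap hx)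
  · exact hσcont.comp_continuousOn hcont
  · intro x hx
    show shiftMap A (ψ (shiftMap A (ψ x))) = x
    have h1 := flip_shiftZ himg ⟨hmap, hcont, hinv, hcomm⟩ 1 (hmap hx)
    show shiftZ A 1 (ψ (shiftZ A 1 (ψ x))) = x
    rw [h1, hinv x hx, shiftZ_shiftZ]
    norm_num [shiftZ_zero]
  · intro x hx
    show shiftZ A 1 (ψ (shiftZ A 1 x)) = shiftZ A (-1) (shiftZ A 1 (ψ x))
    rw [hcomm x hx, shiftZ_shiftZ, shiftZ_shiftZ]
    norm_num

end Flip

/-! ### closedness: a point all of whose windows extend to points of X is in X -/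

theorem mem_of_windows [TopologicalSpace A] {X : Set (ℤ → A)} (hcl : IsClosed X)
    {x : ℤ → A} (h : ∀ n : ℕ, ∃ y ∈ X, ∀ j : ℤ, |j| ≤ (n : ℤ) → y j = x j) : x ∈ X := by
  choose y hyX hyx using h
  have htend : Filter.Tendsto y Filter.atTop (nhds x) := by
    rw [tendsto_pi_nhds]
    intro j
    apply Filter.Tendsto.congr' _ tendsto_const_nhds
    filter_upwards [Filter.eventually_ge_atTop j.natAbs] with n hn
    have habs : |j| = (j.natAbs : ℤ) := Int.abs_eq_natAbs j
    exact (hyx n j (by omega)).symm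
  exact hcl.mem_of_tendsto htend (Filter.Eventually.of_forall hyX)

/-! ### the sliding-block radius of a continuous map on X -/

theorem exists_radius [Fintype A] [TopologicalSpace A] [DiscreteTopology A] {X : Set (ℤ → A)}
    (hcl : IsClosed X) {ψ : (ℤ → A) → ℤ → A} (hcont : ContinuousOn ψ X) :
    ∃ M : ℕ, ∀ x ∈ X, ∀ y ∈ X, (∀ t : ℤ, |t| ≤ (M : ℤ) → x t = y t) → ψ x 0 = ψ y 0 := by
  by_contra hno
  push_neg at hno
  choose xs hxs ys hys hagree hne using hno
  haveI : CompactSpace A := Finite.compactSpace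
  have hXc : IsCompact X := hcl.isCompact
  obtain ⟨a, haX, k, hk, htend⟩ := hXc.tendsto_subseq hxs
  have htendy : Filter.Tendsto (fun n => ys (k n)) Filter.atTop (nhds a) := by
    rw [tendsto_pi_nhds] at htend ⊢
    intro j
    apply Filter.Tendsto.congr' _ (htend j)
    filter_upwards [Filter.eventually_ge_atTop j.natAbs] with n hn
    have : (j.natAbs : ℤ) ≤ (k n : ℤ) := by
      exact_mod_cast Int.ofNat_le.mpr (le_trans hn (StrictMono.le_apply hk))
    have habs : |j| = (j.natAbs : ℤ) := Int.abs_eq_natAbs j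
    exact hagree (k n) j (by omega)
  have hcw : ContinuousWithinAt ψ X a := hcont a haX
  have h1 : Filter.Tendsto (fun n => ψ (xs (k n)) 0) Filter.atTop (nhds (ψ a 0)) := by
    have := hcw.tendsto.comp
      (tendsto_nhdsWithin_of_tendsto_nhds_of_eventually_within _ htend
        (Filter.Eventually.of_forall fun n => hxs (k n)))
    exact ((continuous_apply (0 : ℤ)).tendsto _).comp this
  have h2 : Filter.Tendsto (fun n => ψ (ys (k n)) 0) Filter.atTop (nhds (ψ a 0)) := by
    have := hcw.tendsto.comp
      (tendsto_nhdsWithin_of_tendsto_nhds_of_eventually_within _ htendy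
        (Filter.Eventually.of_forall fun n => hys (k n)))
    exact ((continuous_apply (0 : ℤ)).tendsto _).comp this
  rw [nhds_discrete, Filter.tendsto_pure] at h1 h2
  have := (h1.and h2).exists
  obtain ⟨n, e1, e2⟩ := this
  exact hne (k n) (e1.trans e2.symm)

/-! ### determination -/

theorem determination [TopologicalSpace A] {X : Set (ℤ → A)} {ψ : (ℤ → A) → ℤ → A}
    (himg : shiftMap A '' X = X) (hψ : IsFlip X ψ) {M : ℤ}
    (hM : ∀ x ∈ X, ∀ y ∈ X, (∀ t : ℤ, |t| ≤ M → x t = y t) → ψ x 0 = ψ y 0)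
    {x y : ℤ → A} (hx : x ∈ X) (hy : y ∈ X) (i j : ℤ)
    (h : ∀ t : ℤ, |t| ≤ M → x (t - i) = y (t - j)) : ψ x i = ψ y j := by
  have hx' : shiftZ A (-i) x ∈ X := mem_shiftZ himg _ hx
  have hy' : shiftZ A (-j) y ∈ X := mem_shiftZ himg _ hy
  have h0 : ψ (shiftZ A (-i) x) 0 = ψ (shiftZ A (-j) y) 0 := by
    apply hM _ hx' _ hy'
    intro t ht
    show x (t + -i) = y (t + -j)
    rw [show t + -i = t - i from by ring, show t + -j = t - j from by ring]
    exact h t ht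
  have e1 : ψ (shiftZ A (-i) x) = shiftZ A i (ψ x) := by
    rw [flip_shiftZ himg hψ (-i) hx, neg_neg]
  have e2 : ψ (shiftZ A (-j) y) = shiftZ A j (ψ y) := by
    rw [flip_shiftZ himg hψ (-j) hy, neg_neg]
  rw [e1, e2] at h0
  show ψ x i = ψ y j
  have : (0 : ℤ) + i = i := by ring
  rw [← this, ← shiftZ_apply i (ψ x) 0, h0, shiftZ_apply]
  congr 1
  ring

/-! ### periodicity helpers -/

theorem period_mul {f : ℤ → A} {N : ℤ} (h : ∀ i, f (i + N) = f i) (j : ℤ) (i : ℤ) :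
    f (i + j * N) = f i := by
  induction j using Int.induction_on with
  | zero => norm_num
  | succ n ih =>
      rw [show i + ((n : ℤ) + 1) * N = (i + n * N) + N from by ring, h, ih]
  | pred n ih =>
      rw [show i + (-(n : ℤ) - 1) * N = (i + (-(n:ℤ)) * N) - N from by ring]
      have h2 := h (i + (-(n:ℤ)) * N - N)
      rw [sub_add_cancel] at h2
      rw [← h2, ih]

theorem occursAt_of_period {f : ℤ → A} {N : ℤ} (h : ∀ i, f (i + N) = f i)
    {w : List A} {c : ℤ} (hw : OccursAt w f c) (j : ℤ) : OccursAt w f (c + j * N) := by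
  rw [occursAt_iff] at hw ⊢
  intro k hk
  rw [show c + j * N + (k : ℤ) = (c + k) + j * N from by ring, period_mul h j]
  exact hw k hk

/-! ### periodic points containing given blocks -/

theorem exists_periodic [TopologicalSpace A] {X : Set (ℤ → A)}
    (hcl : IsClosed X) (himg : shiftMap A '' X = X) (hirr : ShiftIrreducible X)
    {w : List A} (hw : IsFinitary X w) {V : List A} (hV : IsBlockOf X V) (hVne : V ≠ []) :
    ∃ p ∈ X, ∃ N : ℤ, 1 ≤ N ∧ (∀ i, p (i + N) = p i) ∧ OccursAt w p 0 ∧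
      ∃ c : ℤ, OccursAt V p c := by
  obtain ⟨a, ha⟩ := hirr w V hw.1 hV
  obtain ⟨b, hb⟩ := hirr (w ++ a ++ V) w ha hw.1
  set P : List A := w ++ a ++ V ++ b with hPdef
  have hPw : IsBlockOf X (P ++ w) := hb
  have hNpos : 0 < P.length := by
    have : 0 < V.length := List.length_pos_iff.mpr hVne
    simp [hPdef]
    omega
  set N : ℕ := P.length with hNdef
  -- an inhabitant of A
  obtain ⟨x₀, hx₀X, i₀, hocc₀⟩ := hw.1
  haveI : Inhabited A := ⟨x₀ 0⟩
  set p : ℤ → A := fun i => P.getI (i % (N : ℤ)).toNat with hpdef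
  have hper : ∀ i : ℤ, p (i + N) = p i := by
    intro i
    show P.getI ((i + N) % (N:ℤ)).toNat = P.getI (i % (N:ℤ)).toNat
    congr 2
    have : i + (N:ℤ) = i + (N:ℤ) * 1 := by ring
    rw [this, Int.add_mul_emod_self_left]
  have hgetI : ∀ k : ℕ, (hk : k < P.length) → ∀ i : ℤ, i = (k : ℤ) →
      p i = P.get ⟨k, hk⟩ := by
    intro k hk i hi
    show P.getI (i % (N:ℤ)).toNat = _
    have h1 : i % (N : ℤ) = i := Int.emod_eq_of_lt (by omega) (by omega)
    rw [h1, hi]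
    simp only [Int.toNat_natCast]
    exact List.getI_eq_getElem (l := P) hk
  have hpP : ∀ j : ℤ, OccursAt P p (j * N) := by
    have h0 : OccursAt P p 0 := by
      rw [occursAt_iff]
      intro k hk
      exact hgetI k hk _ (by omega)
    intro j
    have := occursAt_of_period hper h0 j
    rwa [zero_add] at this
  -- w is a prefix of P
  have hPsplit : P = w ++ (a ++ V ++ b) := by simp [hPdef]
  have hpw : ∀ j : ℤ, OccursAt w p (j * N) := by
    intro j
    have := hpP j
    rw [hPsplit] at this
    exact occursAt_append_left this
  -- the gluing blocks
  set Q : ℕ → List A := fun k => Nat.rec w (fun _ ih => P ++ ih) k with hQdef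
  have hQzero : Q 0 = w := rfl
  have hQsucc : ∀ k, Q (k + 1) = P ++ Q k := fun k => rfl
  have hQpre : ∀ k, ∃ s, Q k = w ++ s := by
    intro k
    cases k with
    | zero => exact ⟨[], by simp [hQzero]⟩
    | succ k => exact ⟨a ++ V ++ b ++ Q k, by rw [hQsucc, hPsplit]; simp⟩
  have hQblk : ∀ k, IsBlockOf X (Q k) := by
    intro k
    induction k with
    | zero => rw [hQzero]; exact hw.1
    | succ k ih =>
        obtain ⟨s, hs⟩ := hQpre k
        have h2 : IsBlockOf X (w ++ s) := by rwa [← hs]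
        have h3 := hw.2 P s hPw h2
        rw [hQsucc, hs]
        have : P ++ w ++ s = P ++ (w ++ s) := by simp
        rwa [this] at h3
  have hQlen : ∀ k, (Q k).length = k * N + w.length := by
    intro k
    induction k with
    | zero => simp [hQzero]
    | succ k ih => rw [hQsucc]; simp only [List.length_append, ih]; ring
  have hQocc : ∀ k : ℕ, ∀ j : ℤ, OccursAt (Q k) p (j * N) := by
    intro k
    induction k with
    | zero => rw [hQzero]; exact hpw
    | succ k ih =>
        intro j
        rw [hQsucc]
        apply occursAt_append (hpP j)
        have := ih (j + 1)
        rw [show (j + 1) * (N:ℤ) = j * N + (N:ℤ) from by ring] at this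
        exact this
  -- p ∈ X
  have hpX : p ∈ X := by
    apply mem_of_windows hcl
    intro n
    set k : ℕ := n + 1 with hkdef
    have hocc : OccursAt (Q (2 * k)) p ((-(k : ℤ)) * N) := hQocc (2 * k) (-(k:ℤ))
    obtain ⟨x₁, hx₁X, i₁, hocc₁⟩ := hQblk (2 * k)
    set y : ℤ → A := shiftZ A (i₁ + (k : ℤ) * N) x₁ with hydef
    have hyX : y ∈ X := mem_shiftZ himg _ hx₁X
    have hoccy : OccursAt (Q (2 * k)) y ((-(k:ℤ)) * N) := by
      have := occursAt_shiftZ hocc₁ (i₁ + (k : ℤ) * N)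
      rwa [show i₁ - (i₁ + (k : ℤ) * N) = (-(k:ℤ)) * N from by ring] at this
    refine ⟨y, hyX, fun j hj => ?_⟩
    have h1 : (1 : ℤ) ≤ N := by exact_mod_cast hNpos
    have hk1 : (k : ℤ) = (n : ℤ) + 1 := by exact_mod_cast congrArg (Nat.cast (R := ℤ)) hkdef
    have hks : (k : ℤ) ≤ (k : ℤ) * N := le_mul_of_one_le_right (by positivity) h1
    apply eq_on_of_occursAt hoccy hocc
    · nlinarith [le_abs_self j, neg_abs_le j]
    · have h2 : ((Q (2 * k)).length : ℤ) = 2 * k * N + w.length := by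
        rw [hQlen]; push_cast; ring
      rw [h2]
      nlinarith [le_abs_self j, neg_abs_le j, Int.ofNat_nonneg w.length]
  refine ⟨p, hpX, (N : ℤ), by exact_mod_cast hNpos, hper, ?_, ?_⟩
  · have := hpw 0
    rwa [zero_mul] at this
  · refine ⟨(w ++ a).length, ?_⟩
    have h1 := hpP 0
    rw [zero_mul] at h1
    rw [show P = ((w ++ a) ++ V) ++ b from by simp [hPdef]] at h1
    have h2 := occursAt_append_left h1
    have h3 := occursAt_append_right h2
    rwa [zero_add] at h3

/-! ### existence of a block avoiding a periodic point -/

theorem exists_block_avoid [TopologicalSpace A] {X : Set (ℤ → A)} (hinf : X.Infinite)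
    {p : ℤ → A} (hp : p ∈ X) {N : ℤ} (hN : 1 ≤ N) (hper : ∀ i, p (i + N) = p i) :
    ∃ v : List A, IsBlockOf X v ∧ ¬ ∃ c : ℤ, OccursAt v p c := by
  by_contra hno
  push_neg at hno
  apply hinf
  have key : ∀ x ∈ X, ∃ ρ : ℤ, 0 ≤ ρ ∧ ρ < N ∧ x = shiftZ A ρ p := by
    intro x hx
    have hwin : ∀ n : ℕ, ∃ s : ℤ, 0 ≤ s ∧ s < N ∧ ∀ j : ℤ, |j| ≤ (n : ℤ) → x j = p (s + j) := by
      intro n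
      obtain ⟨c, hc⟩ := hno (word x (-(n:ℤ)) (2 * n + 1)) ⟨x, hx, _, occursAt_word _ _ _⟩
      refine ⟨(c + n) % N, Int.emod_nonneg _ (by omega), Int.emod_lt_of_pos _ (by omega), ?_⟩
      intro j hj
      have habs : |j| = (j.natAbs : ℤ) := Int.abs_eq_natAbs j
      have h1 : x j = p (c + n + j) := by
        rw [occursAt_iff] at hc
        have hk : (j + n).toNat < (word x (-(n:ℤ)) (2 * n + 1)).length := by
          rw [word_length]; omega
        have h2 := hc (j + n).toNat hk
        have h3 : (((j + (n:ℤ)).toNat : ℤ)) = j + n := by omega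
        rw [h3] at h2
        have h4 : (word x (-(n:ℤ)) (2 * n + 1)).get ⟨(j + (n:ℤ)).toNat, hk⟩ = x j := by
          simp only [word, List.get_eq_getElem, List.getElem_ofFn]
          congr 1
          omega
        rw [h4] at h2
        rw [← h2]
        congr 1
        ring
      rw [h1]
      have hdm := Int.mul_ediv_add_emod (c + n) N
      have heq : c + (n : ℤ) + j = ((c + n) % N + j) + ((c + n) / N) * N := by linarith [hdm]
      rw [heq, period_mul hper]
    choose s hs0 hsN hsag using hwin
    have hfin : Set.Finite (Set.Icc (0:ℤ) (N - 1)) := Set.finite_Icc _ _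
    haveI : Finite (Set.Icc (0:ℤ) (N-1)) := hfin
    set f : ℕ → Set.Icc (0:ℤ) (N-1) := fun n => ⟨s n, ⟨hs0 n, by have := hsN n; omega⟩⟩ with hfdef
    obtain ⟨ρ, hρ⟩ := Finite.exists_infinite_fiber f
    have hρinf : (f ⁻¹' {ρ} : Set ℕ).Infinite := (Set.infinite_coe_iff (s := f ⁻¹' {ρ})).mp hρ
    refine ⟨(ρ : ℤ), ρ.2.1, by have := ρ.2.2; omega, ?_⟩
    funext j
    obtain ⟨n, hn1, hn2⟩ := hρinf.exists_gt j.natAbs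
    have hsn : s n = (ρ : ℤ) := by
      have : f n = ρ := hn1
      exact congrArg Subtype.val this
    have := hsag n j (by have := Int.abs_eq_natAbs j; omega)
    rw [hsn] at this
    rw [this, shiftZ_apply]
    congr 1
    ring
  have hsub : X ⊆ (fun ρ : ℤ => shiftZ A ρ p) '' (Set.Icc 0 (N - 1)) := by
    intro x hx
    obtain ⟨ρ, h0, h1, h2⟩ := key x hx
    exact ⟨ρ, ⟨h0, by omega⟩, h2.symm⟩
  exact ((Set.finite_Icc _ _).image _).subset hsub

/-! ### the master construction -/

theorem master [Fintype A] [TopologicalSpace A] [DiscreteTopology A]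
    {X : Set (ℤ → A)} (hcl : IsClosed X) (himg : shiftMap A '' X = X)
    {ψ : (ℤ → A) → ℤ → A} (hψ : IsFlip X ψ)
    {w : List A} (hw : IsFinitary X w)
    {p : ℤ → A} (hp : p ∈ X) {N : ℤ} (hN : 1 ≤ N) (hper : ∀ i, p (i + N) = p i)
    (hpw : OccursAt w p 0)
    {v u₁ u₂ : List A} (hv : ¬ ∃ c : ℤ, OccursAt v p c)
    (hD : IsBlockOf X (w ++ u₁ ++ v ++ u₂ ++ w))
    {g : ℤ} (hqw : OccursAt w (ψ p) g)
    (hpar : ∃ S k : ℤ,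
      2 * S = g + w.length - ((w ++ u₁ ++ v ++ u₂ ++ w).length : ℤ) + k * N) :
    (flipAsym X ψ).Nonempty := by
  set D : List A := w ++ u₁ ++ v ++ u₂ ++ w with hDdef
  set ℓ : ℤ := (D.length : ℤ) with hldef
  have hlen : ℓ = w.length + u₁.length + v.length + u₂.length + w.length := by
    rw [hldef, hDdef]
    push_cast [List.length_append]
    ring
  have hwl : (w.length : ℤ) ≤ ℓ := by
    have h0 : (0:ℤ) ≤ u₁.length := by positivity
    have h1 : (0:ℤ) ≤ v.length := by positivity
    have h2 : (0:ℤ) ≤ u₂.length := by positivity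
    have h3 : (0:ℤ) ≤ w.length := by positivity
    linarith [hlen]
  -- radius
  obtain ⟨M₀, hM₀⟩ := exists_radius hcl hψ.2.1
  set M : ℤ := (M₀ : ℤ) with hMdef
  have hM : ∀ x ∈ X, ∀ y ∈ X, (∀ t : ℤ, |t| ≤ M → x t = y t) → ψ x 0 = ψ y 0 := hM₀
  have hMnn : 0 ≤ M := by positivity
  -- choice of S
  obtain ⟨S₀, k₀, hS₀⟩ := hpar
  set uu : ℤ := max (M + 1 - S₀) 0 with huu
  set S : ℤ := S₀ + uu * N with hSdef
  have huu0 : 0 ≤ uu := le_max_right _ _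
  have hSM : M + 1 ≤ S := by
    have h1 : uu ≤ uu * N := le_mul_of_one_le_right huu0 hN
    have h2 : M + 1 - S₀ ≤ uu := le_max_left _ _
    omega
  have hS : 2 * S = g + w.length - ℓ + (k₀ + 2 * uu) * N := by
    rw [hSdef]
    rw [hldef]
    linarith [hS₀]
  -- the points
  set r : ℤ := (w.length : ℤ) - S - ℓ with hrdef
  set z : ℤ → A := shiftZ A r p with hzdef
  have hz : z ∈ X := mem_shiftZ himg r hp
  set q : ℤ → A := ψ p with hqdef
  have hq : q ∈ X := hψ.1 hp
  have hzper : ∀ i, z (i + N) = z i := by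
    intro i
    show p (i + N + r) = p (i + r)
    rw [show i + N + r = (i + r) + N from by ring, hper]
  have hzw : OccursAt w z (S + ℓ - w.length) := by
    have := occursAt_shiftZ hpw r
    rwa [show (0 : ℤ) - r = S + ℓ - w.length from by rw [hrdef]; ring] at this
  have hzwk : ∀ j : ℤ, OccursAt w z (S + ℓ - w.length + j * N) :=
    occursAt_of_period hzper hzw
  have hqper : ∀ i, q (i + N) = q i := by
    have h1 : shiftZ A (-N) p = p := by
      funext i
      show p (i + -N) = p i
      have h := hper (i + -N)
      rw [show i + -N + N = i from by ring] at h
      exact h.symm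
    have h2 : ψ (shiftZ A (-N) p) = shiftZ A N (ψ p) := by
      rw [flip_shiftZ himg hψ (-N) hp, neg_neg]
    have h3 : shiftZ A N q = q := by rw [hqdef, ← h2, h1]
    intro i
    show q (i + N) = q i
    conv_rhs => rw [← h3]
    rfl
  have hψzeq : ψ z = shiftZ A (-r) q := flip_shiftZ himg hψ r hp
  have hψz : OccursAt w (ψ z) S := by
    have hqg : OccursAt w q (g + (k₀ + 2 * uu) * N) := occursAt_of_period hqper hqw _
    have := occursAt_shiftZ hqg (-r)
    rw [← hψzeq] at this
    rwa [show g + (k₀ + 2 * uu) * N - -r = S from by rw [hrdef]; linarith [hS]] at this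
  have hψzX : ψ z ∈ X := hψ.1 hz
  -- the middle point
  obtain ⟨y₀, hy₀X, d, hyD₀⟩ := hD
  set y : ℤ → A := shiftZ A (d - S) y₀ with hydef
  have hyX : y ∈ X := mem_shiftZ himg _ hy₀X
  have hyD : OccursAt D y S := by
    have := occursAt_shiftZ hyD₀ (d - S)
    rwa [show d - (d - S) = S from by ring] at this
  have hD1 : D = w ++ (u₁ ++ v ++ u₂ ++ w) := by rw [hDdef]; simp
  have hD2 : D = (w ++ u₁) ++ (v ++ (u₂ ++ w)) := by rw [hDdef]; simp
  have hD3 : D = (w ++ u₁ ++ v ++ u₂) ++ w := by rw [hDdef]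
  have hyw1 : OccursAt w y S := by
    have := hyD
    rw [hD1] at this
    exact occursAt_append_left this
  have hyv : OccursAt v y (S + w.length + u₁.length) := by
    have h1 := hyD
    rw [hD2] at h1
    have h2 := occursAt_append_right h1
    have h3 := occursAt_append_left h2
    rwa [show S + ((w ++ u₁).length : ℤ) = S + w.length + u₁.length from by
      simp; push_cast; ring] at h3
  have hyw2 : OccursAt w y (S + ℓ - w.length) := by
    have h1 := hyD
    rw [hD3] at h1
    have h2 := occursAt_append_right h1
    rwa [show S + ((w ++ u₁ ++ v ++ u₂).length : ℤ) = S + ℓ - w.length from by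
      simp [hlen]; push_cast; ring] at h2
  -- the glued point
  set x : ℤ → A := fun i => if i < S then ψ z i else if i < S + ℓ then y i else z i
    with hxdef
  have hx_left : ∀ i, i < S + w.length → x i = ψ z i := by
    intro i hi
    by_cases h : i < S
    · simp only [hxdef, if_pos h]
    · push_neg at h
      have h2 : i < S + ℓ := by omega
      simp only [hxdef, if_neg (not_lt.mpr h), if_pos h2]
      exact eq_on_of_occursAt hyw1 hψz h (by omega)
  have hx_mid : ∀ i, S ≤ i → i < S + ℓ → x i = y i := by
    intro i h1 h2
    simp only [hxdef, if_neg (not_lt.mpr h1), if_pos h2]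
  have hx_right : ∀ i, S + ℓ - w.length ≤ i → x i = z i := by
    intro i hi
    by_cases h : i < S + ℓ
    · have h1 : S ≤ i := by omega
      simp only [hxdef, if_neg (not_lt.mpr h1), if_pos h]
      exact eq_on_of_occursAt hyw2 hzw hi (by omega)
    · push_neg at h
      simp only [hxdef, if_neg (by omega : ¬ i < S), if_neg (not_lt.mpr h)]
  -- x ∈ X
  have hxX : x ∈ X := by
    apply mem_of_windows hcl
    intro n
    set nn : ℤ := (n : ℤ) + S + ℓ with hnn
    have hnn1 : (n : ℤ) ≤ nn := by omega
    have hnn2 : S + ℓ ≤ nn := by omega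
    set La : List A := word (ψ z) (-nn) ((S + nn).toNat) with hLa
    have hLalen : (La.length : ℤ) = S + nn := by
      rw [hLa, word_length]; omega
    have hLaocc : OccursAt La (ψ z) (-nn) := occursAt_word _ _ _
    have hLaw : La ++ w = word (ψ z) (-nn) ((S + nn).toNat + w.length) := by
      rw [word_append]
      congr 1
      have : -nn + ((S + nn).toNat : ℤ) = S := by omega
      rw [this]
      exact (word_eq_of_occursAt hψz).symm
    have block1 : IsBlockOf X (La ++ w) := by
      rw [hLaw]; exact isBlockOf_word hψzX _ _
    have glue1 : IsBlockOf X (La ++ w ++ (u₁ ++ v ++ u₂ ++ w)) :=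
      hw.2 La _ block1 (by rw [← hD1]; exact ⟨y₀, hy₀X, d, hyD₀⟩)
    have reassoc1 : La ++ w ++ (u₁ ++ v ++ u₂ ++ w) = (La ++ (w ++ u₁ ++ v ++ u₂)) ++ w := by
      simp
    set Rb : List A := word z (S + ℓ) ((nn - S - ℓ + 1).toNat) with hRb
    have hRblen : (Rb.length : ℤ) = nn - S - ℓ + 1 := by
      rw [hRb, word_length]; omega
    have block2 : IsBlockOf X (w ++ Rb) := by
      have e1 : S + ℓ - (w.length:ℤ) + (w.length:ℤ) = S + ℓ := by ring
      have : w ++ Rb = word z (S + ℓ - w.length) (w.length + (nn - S - ℓ + 1).toNat) := by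
        rw [word_append, word_eq_of_occursAt hzw, e1]
      rw [this]
      exact isBlockOf_word hz _ _
    have glue2 : IsBlockOf X ((La ++ (w ++ u₁ ++ v ++ u₂)) ++ w ++ Rb) := by
      apply hw.2 _ _ _ block2
      rw [← reassoc1]
      exact glue1
    have hHeq : (La ++ (w ++ u₁ ++ v ++ u₂)) ++ w ++ Rb = La ++ D ++ Rb := by
      rw [hD3]; simp
    rw [hHeq] at glue2
    -- H occurs in x at -nn
    have hHx : OccursAt (La ++ D ++ Rb) x (-nn) := by
      apply occursAt_append
      · apply occursAt_append
        · apply occursAt_congr hLaocc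
          intro j hj1 hj2
          rw [hLalen] at hj2
          exact (hx_left j (by omega)).symm
        · rw [hLalen, show -nn + (S + nn) = S from by ring]
          apply occursAt_congr hyD
          intro j hj1 hj2
          rw [← hldef] at hj2
          exact (hx_mid j hj1 (by omega)).symm
      · have hlen2 : ((La ++ D).length : ℤ) = S + nn + ℓ := by
          simp [List.length_append]
          push_cast
          omega
        rw [hlen2, show -nn + (S + nn + ℓ) = S + ℓ from by ring]
        apply occursAt_congr (occursAt_word z (S + ℓ) _)
        intro j hj1 hj2
        exact (hx_right j (by omega)).symm
    obtain ⟨x₁, hx₁X, i₁, hocc₁⟩ := glue2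
    set y' : ℤ → A := shiftZ A (i₁ + nn) x₁ with hy'
    have hy'X : y' ∈ X := mem_shiftZ himg _ hx₁X
    have hy'occ : OccursAt (La ++ D ++ Rb) y' (-nn) := by
      have := occursAt_shiftZ hocc₁ (i₁ + nn)
      rwa [show i₁ - (i₁ + nn) = -nn from by ring] at this
    refine ⟨y', hy'X, fun j hj => ?_⟩
    have habs : |j| = (j.natAbs : ℤ) := Int.abs_eq_natAbs j
    apply eq_on_of_occursAt hy'occ hHx
    · omega
    · have hHlen : (((La ++ D ++ Rb).length) : ℤ) = 2 * nn + 1 := by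
        simp [List.length_append]
        push_cast
        omega
      omega
  -- infinitely many occurrences of w in x
  have hocc_inf : {i : ℤ | OccursAt w x i}.Infinite := by
    apply Set.infinite_of_injective_forall_mem
      (f := fun k : ℕ => S + ℓ - w.length + (k : ℤ) * N)
    · intro a b hab
      simp only at hab
      have h1 : (a : ℤ) * N = (b : ℤ) * N := by linarith
      have h2 : (a : ℤ) = b := mul_right_cancel₀ (by omega) h1
      exact_mod_cast h2
    · intro k
      show OccursAt w x _
      apply occursAt_congr (hzwk k)
      intro j hj1 hj2
      have hk0 : (0:ℤ) ≤ (k : ℤ) * N := by positivity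
      exact (hx_right j (by omega)).symm
  -- the difference set is finite
  have hdiff_fin : {i : ℤ | ψ x i ≠ x i}.Finite := by
    apply (Set.finite_Icc (-(S + ℓ + M + 1)) (S + ℓ + M + 1)).subset
    intro i hi
    simp only [Set.mem_setOf_eq] at hi
    by_contra hout
    simp only [Set.mem_Icc, not_and_or, not_le] at hout
    apply hi
    rcases hout with hlt | hgt
    · -- i very negative
      have h1 : ψ x i = ψ z i := by
        apply determination himg hψ hM hxX hz i i
        intro t ht
        rw [abs_le] at ht
        apply hx_right
        omega
      rw [h1]
      exact (hx_left i (by omega)).symm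
    · -- i very positive
      have h1 : ψ x i = ψ (ψ z) i := by
        apply determination himg hψ hM hxX hψzX i i
        intro t ht
        rw [abs_le] at ht
        apply hx_left
        omega
      rw [h1, hψ.2.2.1 z hz]
      exact (hx_right i (by omega)).symm
  -- the difference set is nonempty
  have hdiff_ne : {i : ℤ | ψ x i ≠ x i}.Nonempty := by
    by_contra hcon
    rw [Set.not_nonempty_iff_eq_empty] at hcon
    have hall : ∀ i, ψ x i = x i := by
      intro i
      by_contra hne
      exact Set.eq_empty_iff_forall_notMem.mp hcon i hne
    have hxz : ∀ j, S ≤ j → j < S + ℓ → x j = z j := by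
      intro j h1 h2
      have hdet : ψ x j = ψ (ψ z) j := by
        apply determination himg hψ hM hxX hψzX j j
        intro t ht
        rw [abs_le] at ht
        apply hx_left
        omega
      rw [← hall j, hdet, hψ.2.2.1 z hz]
    have hzv : OccursAt v z (S + w.length + u₁.length) := by
      apply occursAt_congr hyv
      intro j hj1 hj2
      have hb : j < S + ℓ := by
        have h0 : (0:ℤ) ≤ w.length := by positivity
        have h1 : (0:ℤ) ≤ u₂.length := by positivity
        omega
      rw [← hx_mid j (by omega) hb, hxz j (by omega) hb]
    apply hv
    refine ⟨S + w.length + u₁.length + r, ?_⟩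
    rw [occursAt_iff] at hzv ⊢
    intro k hk
    have := hzv k hk
    rw [← this]
    show p _ = z _
    rw [hzdef, shiftZ_apply]
    congr 1
    ring
  exact ⟨x, hxX, ⟨w, hw, hocc_inf⟩, hdiff_ne, hdiff_fin⟩

end PropC

open PropC


/-- **Proposition C.** If `X` is an infinite synchronized system and `φ` is a flip for
`(X, σ_X)`, then at least one of `A(φ)` and `A(σ_X ∘ φ)` is non-empty. -/
theorem flipAsym_nonempty_or
    {A : Type*} [Fintype A] [TopologicalSpace A] [DiscreteTopology A]
    (X : Set (ℤ → A)) (hX : IsSynchronized X) (hinf : X.Infinite)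
    (φ : (ℤ → A) → ℤ → A) (hφ : IsFlip X φ) :
    (flipAsym X φ).Nonempty ∨ (flipAsym X (shiftMap A ∘ φ)).Nonempty := by
  obtain ⟨⟨hne, hcl, himg⟩, hirr, w, hw⟩ := hX
  -- a radius for φ
  obtain ⟨M₁, hM₁⟩ := exists_radius hcl hφ.2.1
  set Mn : ℕ := M₁ + 1 with hMn
  set M : ℤ := (Mn : ℤ) with hMZ
  have hM1 : 1 ≤ M := by omega
  have hMdet : ∀ x ∈ X, ∀ y ∈ X, (∀ t : ℤ, |t| ≤ M → x t = y t) → φ x 0 = φ y 0 := by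
    intro x hx y hy hagree
    exact hM₁ x hx y hy fun t ht => hagree t (by omega)
  -- a first periodic point containing w
  obtain ⟨x₀, hx₀⟩ := hne
  have hV₁ne : word x₀ 0 1 ≠ [] := by
    apply List.length_pos_iff.mp
    rw [word_length]
    omega
  obtain ⟨p₁, hp₁X, N₁, hN₁, hper₁, hp₁w, -⟩ :=
    exists_periodic hcl himg hirr hw (isBlockOf_word hx₀ 0 1) hV₁ne
  -- the mirror block V of w
  set z₀ : ℤ → A := φ p₁ with hz₀
  have hz₀X : z₀ ∈ X := hφ.1 hp₁X
  set gV : ℤ := 1 - w.length - M with hgV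
  set V : List A := word z₀ gV (w.length + 2 * Mn) with hVdef
  have hVlen : V.length = w.length + 2 * Mn := word_length z₀ gV _
  have hVne : V ≠ [] := by
    apply List.length_pos_iff.mp
    rw [hVlen]
    omega
  -- the main periodic point p, containing w and V
  obtain ⟨p, hpX, N, hN, hper, hpw, c₀, hpV⟩ :=
    exists_periodic hcl himg hirr hw (isBlockOf_word hz₀X gV _) hVne
  -- w occurs in φ(p)
  set g : ℤ := 1 - c₀ - w.length - M with hg
  have hVocc' : OccursAt V (shiftZ A (gV - c₀) z₀) c₀ := by
    have := occursAt_shiftZ (occursAt_word z₀ gV (w.length + 2 * Mn)) (gV - c₀)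
    rw [show gV - (gV - c₀) = c₀ from by ring] at this
    exact this
  have hqw : OccursAt w (φ p) g := by
    rw [occursAt_iff]
    intro k hk
    have hdet : φ p (g + k) = φ z₀ (k : ℤ) := by
      apply determination himg hφ hMdet hpX hz₀X
      intro t ht
      rw [abs_le] at ht
      have hag : p (t - (g + k)) = shiftZ A (gV - c₀) z₀ (t - (g + k)) := by
        apply eq_on_of_occursAt hpV hVocc'
        · omega
        · rw [hVlen]
          push_cast
          omega
      rw [hag, shiftZ_apply]
      congr 1
      rw [hgV, hg]
      ring
    rw [hdet, hz₀, hφ.2.2.1 p₁ hp₁X]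
    have := hp₁w ⟨k, hk⟩
    rwa [zero_add] at this
  -- a block avoiding p
  obtain ⟨v, hvblk, hvp⟩ := exists_block_avoid hinf hpX hN hper
  -- the middle block D
  obtain ⟨u₁, hu₁⟩ := hirr w v hw.1 hvblk
  obtain ⟨u₂, hu₂⟩ := hirr (w ++ u₁ ++ v) w hu₁ hw.1
  have hD : IsBlockOf X (w ++ u₁ ++ v ++ u₂ ++ w) := hu₂
  -- parity split
  rcases Int.even_or_odd (g + (w.length : ℤ) - ((w ++ u₁ ++ v ++ u₂ ++ w).length : ℤ))
    with hEv | hOd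
  · left
    apply master hcl himg hφ hw hpX hN hper hpw hvp hD hqw
    obtain ⟨S, hS⟩ := hEv
    exact ⟨S, 0, by omega⟩
  · right
    have hψ' : IsFlip X (shiftMap A ∘ φ) := isFlip_shift_comp himg hφ
    have hqw' : OccursAt w ((shiftMap A ∘ φ) p) (g - 1) := by
      show OccursAt w (shiftZ A 1 (φ p)) (g - 1)
      exact occursAt_shiftZ hqw 1
    apply master hcl himg hψ' hw hpX hN hper hpw hvp hD hqw'
    obtain ⟨S, hS⟩ := hOd
    exact ⟨S, 0, by omega⟩
end

section
/- For every shift space X and every flip φ for (X, σ_X), there exist a finite alphabet A', a shift space Y over A', and a one-block flip ψ for (Y, σ_Y) such that the shift-flip system (Y, σ_Y, ψ) is conjugate to (X, σ_X, φ). -/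
open Set Function

/-- **Lemma 2.1.** Every flip for a shift dynamical system can be recoded to a one-block
flip: for every shift space `X` and flip `φ` for `(X, σ_X)` there are a finite alphabet,
a shift space `Y` over it, and a one-block flip `ψ` for `(Y, σ_Y)` such that
`(Y, σ_Y, ψ)` is conjugate to `(X, σ_X, φ)`. -/
theorem exists_one_block_flip_conjugate
    {A : Type*} [Fintype A] [TopologicalSpace A] [DiscreteTopology A]
    (X : Set (ℤ → A)) (hX : IsShiftSpace X)
    (φ : (ℤ → A) → ℤ → A) (hφ : IsFlip X φ) :
    ∃ (N : ℕ) (Y : Set (ℤ → Fin N)) (ψ : (ℤ → Fin N) → ℤ → Fin N),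
      IsShiftSpace Y ∧ IsFlip Y ψ ∧
      (∃ τ : Fin N → Fin N, ∀ y ∈ Y, ∀ i : ℤ, ψ y i = τ (y (-i))) ∧
      SystemConj X φ Y ψ := by
  classical
  obtain ⟨hXne, hXcl, hXsh⟩ := hX
  obtain ⟨hmt, hct, hinvol, hcomm⟩ := hφ
  set N := Fintype.card (A × A) with hN
  let e : A × A ≃ Fin N := Fintype.equivFin _
  let Φ : (ℤ → A) → ℤ → Fin N := fun x i => e (x i, φ x (-i))
  let Ψ : (ℤ → Fin N) → ℤ → A := fun y i => (e.symm (y i)).1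
  let τ : Fin N → Fin N := fun a => e ((e.symm a).2, (e.symm a).1)
  let ψ : (ℤ → Fin N) → ℤ → Fin N := fun y i => τ (y (-i))
  have hΨΦ : ∀ x, Ψ (Φ x) = x := by
    intro x; funext i; simp [Ψ, Φ]
  have hσmem : ∀ x ∈ X, shiftMap A x ∈ X := by
    intro x hx
    rw [← hXsh]; exact Set.mem_image_of_mem _ hx
  have hΦcont : ContinuousOn Φ X := by
    apply continuousOn_pi.2
    intro i
    have h1 : ContinuousOn (fun x : ℤ → A => (x i, φ x (-i))) X :=
      ((continuous_apply i).continuousOn).prodMk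
        ((continuous_apply (-i)).comp_continuousOn hct)
    exact (continuous_of_discreteTopology (f := fun p : A × A => e p)).comp_continuousOn h1
  have hshift : ∀ x ∈ X, Φ (shiftMap A x) = shiftMap (Fin N) (Φ x) := by
    intro x hx; funext i
    show e ((shiftMap A x) i, φ (shiftMap A x) (-i)) = Φ x (i + 1)
    rw [hcomm x hx]
    show e (x (i + 1), φ x (-i + -1)) = e (x (i + 1), φ x (-(i + 1)))
    have h2 : (-i + -1 : ℤ) = -(i + 1) := by ring
    rw [h2]
  have hflip : ∀ x ∈ X, Φ (φ x) = ψ (Φ x) := by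
    intro x hx; funext i
    show e (φ x i, φ (φ x) (-i)) = τ (Φ x (-i))
    rw [hinvol x hx]
    show e (φ x i, x (-i)) = e ((e.symm (e (x (-i), φ x (-(-i))))).2,
      (e.symm (e (x (-i), φ x (-(-i))))).1)
    simp
  have hψinv : ∀ y, ψ (ψ y) = y := by
    intro y; funext i
    show τ (τ (y (-(-i)))) = y i
    simp [τ]
  have hψcont : Continuous ψ := by
    apply continuous_pi
    intro i
    exact (continuous_of_discreteTopology (f := τ)).comp (continuous_apply (-i))
  have hψcomm : ∀ y : ℤ → Fin N, ψ (shiftMap (Fin N) y) = shiftInv (Fin N) (ψ y) := by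
    intro y; funext i
    show τ (y (-i + 1)) = τ (y (-(i + -1)))
    have h2 : (-i + 1 : ℤ) = -(i + -1) := by ring
    rw [h2]
  refine ⟨N, Φ '' X, ψ, ⟨hXne.image _, ?_, ?_⟩, ⟨?_, hψcont.continuousOn,
    fun y _ => hψinv y, fun y _ => hψcomm y⟩, ⟨τ, fun y _ i => rfl⟩,
    Φ, Ψ, Set.mapsTo_image _ _, hΦcont, ?_, ?_, ⟨fun x hx => hΨΦ x, ?_⟩, hshift, hflip⟩
  · -- closed
    exact ((hXcl.isCompact).image_of_continuousOn hΦcont).isClosed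
  · -- shift invariance of Y
    ext y
    constructor
    · rintro ⟨_, ⟨x, hx, rfl⟩, rfl⟩
      exact ⟨shiftMap A x, hσmem x hx, hshift x hx⟩
    · rintro ⟨x, hx, rfl⟩
      have hx' : x ∈ shiftMap A '' X := by rw [hXsh]; exact hx
      obtain ⟨z, hz, hzx⟩ := hx'
      exact ⟨Φ z, Set.mem_image_of_mem _ hz, by rw [← hshift z hz, hzx]⟩
  · -- MapsTo ψ Y Y
    rintro _ ⟨x, hx, rfl⟩
    rw [← hflip x hx]
    exact Set.mem_image_of_mem _ (hmt hx)
  · -- MapsTo Ψ Y X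
    rintro _ ⟨x, hx, rfl⟩
    rw [hΨΦ x]; exact hx
  · -- ContinuousOn Ψ
    refine (continuous_pi fun i => ?_).continuousOn
    exact (continuous_of_discreteTopology (f := fun a : Fin N => (e.symm a).1)).comp
      (continuous_apply i)
  · -- RightInvOn
    rintro _ ⟨x, hx, rfl⟩
    rw [hΨΦ x]
end

section
/- If X is an irreducible shift space with infinitely many points and f is a symbol of X (a block of length 1), then there exist blocks a, b ∈ B(X) such that: (a) faf ∈ B(X) and fbf ∈ B(X), (b) the symbol f does not appear in b, and (c) the block fbfa does not appear in any bi-infinite sequence x ∈ A^ℤ satisfying σ^{|a|+1}(x) = x. -/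
open Set Function

section Helpers

variable {A : Type*}

private lemma occursAt_append {u v : List A} {x : ℤ → A} {i : ℤ} :
    OccursAt (u ++ v) x i ↔ OccursAt u x i ∧ OccursAt v x (i + u.length) := by
  constructor
  · intro h
    constructor
    · intro k
      have := h ⟨k, by have := k.isLt; rw [List.length_append]; omega⟩
      simpa [List.get_eq_getElem, List.getElem_append_left] using this
    · intro k
      have := h ⟨u.length + k, by have := k.isLt; rw [List.length_append]; omega⟩
      simp only [List.get_eq_getElem] at this ⊢
      rw [List.getElem_append_right (by omega)] at this
      simp only [Nat.add_sub_cancel_left] at this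
      rw [← this]
      congr 1
      push_cast; ring
  · intro ⟨h1, h2⟩ k
    by_cases hk : (k : ℕ) < u.length
    · have := h1 ⟨k, hk⟩
      simp only [List.get_eq_getElem] at this ⊢
      rw [List.getElem_append_left hk]
      exact this
    · have hk2 : (k : ℕ) - u.length < v.length := by
        have := Nat.lt_of_lt_of_eq k.isLt List.length_append; omega
      have := h2 ⟨(k : ℕ) - u.length, hk2⟩
      simp only [List.get_eq_getElem] at this ⊢
      rw [List.getElem_append_right (by omega)]
      rw [← this]
      congr 1
      omega

private lemma occursAt_singleton {f : A} {x : ℤ → A} {i : ℤ} :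
    OccursAt [f] x i ↔ x i = f := by
  constructor
  · intro h; have := h ⟨0, by simp⟩; simpa using this
  · intro h k
    have hk : (k : ℕ) = 0 := by have : (k : ℕ) < 1 := k.isLt; omega
    simp [hk, h]

private lemma firstSplit {f : A} {l : List A} (h : f ∈ l) :
    ∃ s t, l = s ++ f :: t ∧ f ∉ s := by
  induction l with
  | nil => simp at h
  | cons a l ih =>
    by_cases ha : a = f
    · exact ⟨[], l, by simp [ha], by simp⟩
    · have hf : f ∈ l := by
        rcases List.mem_cons.mp h with h | h
        · exact absurd h.symm ha
        · exact h
      obtain ⟨s, t, rfl, hs⟩ := ih hf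
      exact ⟨a :: s, t, by simp, by
        simp only [List.mem_cons]
        rintro (h | h)
        · exact ha h.symm
        · exact hs h⟩

private lemma shiftIter (n : ℕ) (x : ℤ → A) (t : ℤ) :
    ((shiftMap A)^[n] x) t = x (t + n) := by
  induction n generalizing x with
  | zero => simp
  | succ n ih =>
    rw [Function.iterate_succ_apply, ih]
    show x (t + n + 1) = _
    congr 1; push_cast; ring

end Helpers

/-- **Lemma 2.2.** If `X` is an irreducible shift space with infinitely many points and
`f` is a symbol of `X`, then there are blocks `a, b ∈ B(X)` such that (a) `faf` and
`fbf` are blocks of `X`, (b) `f` does not appear in `b`, and (c) `fbfa` does not appear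
in any `(|a|+1)`-periodic point of the full shift. -/
theorem exists_blocks_faf_fbf
    {A : Type*} [Fintype A] [TopologicalSpace A] [DiscreteTopology A]
    (X : Set (ℤ → A)) (hX : IsShiftSpace X) (hirr : ShiftIrreducible X)
    (hinf : X.Infinite) (f : A) (hf : IsBlockOf X [f]) :
    ∃ a b : List A, IsBlockOf X ([f] ++ a ++ [f]) ∧ IsBlockOf X ([f] ++ b ++ [f]) ∧
      f ∉ b ∧
      ∀ x : ℤ → A, (shiftMap A)^[a.length + 1] x = x →
        ∀ i : ℤ, ¬ OccursAt ([f] ++ b ++ [f] ++ a) x i := by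
  classical
  -- Step 1: find an f-free "gap" block c0 with f c0 f ∈ B(X)
  obtain ⟨w0, hw0⟩ := hirr [f] [f] hf hf
  obtain ⟨c0, hc0f, hc0⟩ : ∃ c, f ∉ c ∧ IsBlockOf X ([f] ++ c ++ [f]) := by
    by_cases hmem : f ∈ w0
    · obtain ⟨s, t, rfl, hs⟩ := firstSplit hmem
      refine ⟨s, hs, ?_⟩
      have heq : [f] ++ (s ++ f :: t) ++ [f] = ([f] ++ s ++ [f]) ++ (t ++ [f]) := by simp
      rw [heq] at hw0
      obtain ⟨x, hx, i, ho⟩ := hw0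
      exact ⟨x, hx, i, (occursAt_append.mp ho).1⟩
    · exact ⟨w0, hmem, hw0⟩
  by_cases H : ∃ c, f ∉ c ∧ IsBlockOf X ([f] ++ c ++ [f]) ∧ c ≠ c0
  · -- Two distinct f-free gaps exist: take a := c, b := c0
    obtain ⟨a, haf, hab, hane⟩ := H
    refine ⟨a, c0, hab, hc0, hc0f, ?_⟩
    intro x hper i hocc
    have hx : ∀ t : ℤ, x (t + (a.length + 1 : ℕ)) = x t := by
      intro t
      have h := shiftIter (a.length + 1) x t
      rw [hper] at h
      exact h.symm
    have h1 := occursAt_append.mp hocc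
    have h2 := occursAt_append.mp h1.1
    have h3 := occursAt_append.mp h2.1
    have hxi : x i = f := occursAt_singleton.mp h3.1
    have hb : OccursAt c0 x (i + 1) := by
      have := h3.2; simpa using this
    have hmid : x (i + ((c0.length : ℤ) + 1)) = f := by
      have := occursAt_singleton.mp h2.2
      have heq : i + (([f] ++ c0).length : ℤ) = i + ((c0.length : ℤ) + 1) := by
        simp; try ring
      rwa [heq] at this
    have ha : OccursAt a x (i + ((c0.length : ℤ) + 2)) := by
      have := h1.2
      have heq : i + ((([f] ++ c0) ++ [f]).length : ℤ) = i + ((c0.length : ℤ) + 2) := by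
        simp; try ring
      rwa [heq] at this
    rcases lt_trichotomy a.length c0.length with hlen | hlen | hlen
    · -- |a| < |c0| : then x(i + |a| + 1) is both f and a letter of c0
      have e1 := hb ⟨a.length, hlen⟩
      have e2 := hx i
      have heq : i + 1 + (a.length : ℤ) = i + ((a.length + 1 : ℕ) : ℤ) := by
        push_cast; ring
      rw [heq, e2, hxi] at e1
      exact hc0f (e1 ▸ List.get_mem c0 ⟨a.length, hlen⟩)
    · -- |a| = |c0| : then a = c0
      apply hane
      apply List.ext_get (by rw [hlen])
      intro n hn1 hn2
      have eA := ha ⟨n, hn1⟩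
      have eB := hb ⟨n, hn2⟩
      have eP := hx (i + 1 + n)
      have heq : i + 1 + (n : ℤ) + ((a.length + 1 : ℕ) : ℤ)
          = i + ((c0.length : ℤ) + 2) + (n : ℤ) := by push_cast; omega
      rw [heq] at eP
      rw [eP, eB] at eA
      exact eA.symm
    · -- |a| > |c0| : then the letter of a at position |a|-|c0|-1 is f
      have hj : a.length - c0.length - 1 < a.length := by omega
      have e1 := ha ⟨a.length - c0.length - 1, hj⟩
      have e2 := hx i
      have heq : i + ((c0.length : ℤ) + 2) + ((a.length - c0.length - 1 : ℕ) : ℤ)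
          = i + ((a.length + 1 : ℕ) : ℤ) := by push_cast; omega
      rw [heq, e2, hxi] at e1
      exact haf (e1 ▸ List.get_mem a ⟨_, hj⟩)
  · -- The gap is unique: X is finite, contradiction
    exfalso
    push_neg at H
    have H' : ∀ c : List A, f ∉ c → IsBlockOf X ([f] ++ c ++ [f]) → c = c0 := by
      intro c h1 h2
      by_contra hne
      exact hne (H c h1 h2)
    -- key periodic-pattern lemma
    have key : ∀ n (v : List A), v.length = n → ∀ y ∈ X, ∀ i : ℤ,
        OccursAt ([f] ++ v ++ [f]) y i →
        ∀ j : ℕ, j ≤ v.length + 1 →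
          y (i + j) = ([f] ++ c0).getD (j % (c0.length + 1)) f := by
      intro n
      induction n using Nat.strong_induction_on with
      | _ n ih =>
        intro v hv y hy i hocc j hj
        by_cases hmem : f ∈ v
        · obtain ⟨s, t, rfl, hs⟩ := firstSplit hmem
          have hblock : IsBlockOf X ([f] ++ s ++ [f]) := by
            have heq : [f] ++ (s ++ f :: t) ++ [f] = ([f] ++ s ++ [f]) ++ (t ++ [f]) := by
              simp
            rw [heq] at hocc
            exact ⟨y, hy, i, (occursAt_append.mp hocc).1⟩
          have hsc0 : s = c0 := H' s hs hblock
          rw [hsc0] at hocc hj hv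
          have hocc2 : OccursAt ([f] ++ t ++ [f]) y (i + ((c0.length : ℤ) + 1)) := by
            have heq : [f] ++ (c0 ++ f :: t) ++ [f] = ([f] ++ c0) ++ ([f] ++ t ++ [f]) := by
              simp
            rw [heq] at hocc
            have h := (occursAt_append.mp hocc).2
            have heq2 : i + ((([f] ++ c0)).length : ℤ) = i + ((c0.length : ℤ) + 1) := by
              simp; try ring
            rwa [heq2] at h
          have hpre : OccursAt ([f] ++ c0) y i := by
            have heq : [f] ++ (c0 ++ f :: t) ++ [f] = ([f] ++ c0) ++ ([f] ++ t ++ [f]) := by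
              simp
            rw [heq] at hocc
            exact (occursAt_append.mp hocc).1
          rcases lt_or_ge j (c0.length + 1) with hlt | hge
          · have hlt' : j < ([f] ++ c0).length := by simpa using hlt
            have e := hpre ⟨j, hlt'⟩
            rw [e, Nat.mod_eq_of_lt hlt, List.getD_eq_getElem _ _ hlt']
            simp [List.get_eq_getElem]
          · have hlen : (c0 ++ f :: t).length = c0.length + 1 + t.length := by
              simp; omega
            have hj' : j - (c0.length + 1) ≤ t.length + 1 := by omega
            have htlt : t.length < n := by omega
            have e := ih t.length htlt t rfl y hy _ hocc2 (j - (c0.length + 1)) hj'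
            have hposeq : i + ((c0.length : ℤ) + 1) + ((j - (c0.length + 1) : ℕ) : ℤ)
                = i + (j : ℤ) := by push_cast; omega
            rw [hposeq] at e
            rw [e]
            congr 1
            have hjj : j = (j - (c0.length + 1)) + (c0.length + 1) := by omega
            have hm := Nat.add_mod_right (j - (c0.length + 1)) (c0.length + 1)
            rw [← hjj] at hm
            exact hm.symm
        · have hvc0 : v = c0 := H' v hmem ⟨y, hy, i, hocc⟩
          rw [hvc0] at hocc hj
          have hsplit := occursAt_append.mp hocc
          rcases lt_or_ge j (c0.length + 1) with hlt | hge
          · have hlt' : j < ([f] ++ c0).length := by simpa using hlt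
            have e := hsplit.1 ⟨j, hlt'⟩
            rw [e, Nat.mod_eq_of_lt hlt, List.getD_eq_getElem _ _ hlt']
            simp [List.get_eq_getElem]
          · have hje : j = c0.length + 1 := by omega
            subst hje
            have e := occursAt_singleton.mp hsplit.2
            have heq : i + ((([f] ++ c0)).length : ℤ) = i + ((c0.length + 1 : ℕ) : ℤ) := by
              simp
            rw [heq] at e
            rw [e, Nat.mod_self]
            simp
    -- every point of X is (|c0|+1)-periodic
    have per : ∀ x ∈ X, ∀ t : ℤ, x (t + ((c0.length : ℤ) + 1)) = x t := by
      intro x hx t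
      set p := c0.length + 1 with hp
      set u : List A := List.ofFn (fun k : Fin (p + 1) => x (t + (k : ℕ))) with hu
      have hulen : u.length = p + 1 := by rw [hu, List.length_ofFn]
      have huocc : OccursAt u x t := by
        intro k
        simp only [hu, List.get_eq_getElem, List.getElem_ofFn]
      have hub : IsBlockOf X u := ⟨x, hx, t, huocc⟩
      obtain ⟨w1, h1⟩ := hirr [f] u hf hub
      obtain ⟨w2, h2⟩ := hirr ([f] ++ w1 ++ u) [f] h1 hf
      have heq : ([f] ++ w1 ++ u) ++ w2 ++ [f] = [f] ++ (w1 ++ u ++ w2) ++ [f] := by simp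
      rw [heq] at h2
      obtain ⟨y, hy, i, hocc⟩ := h2
      have hk := key (w1 ++ u ++ w2).length _ rfl y hy i hocc
      have huy : OccursAt u y (i + (1 + (w1.length : ℤ))) := by
        have heq2 : [f] ++ (w1 ++ u ++ w2) ++ [f] = ([f] ++ w1) ++ (u ++ (w2 ++ [f])) := by
          simp
        rw [heq2] at hocc
        have h := (occursAt_append.mp (occursAt_append.mp hocc).2).1
        have heq3 : i + ((([f] ++ w1)).length : ℤ) = i + (1 + (w1.length : ℤ)) := by
          simp; try ring
        rwa [heq3] at h
      have hlen2 : (w1 ++ u ++ w2).length = w1.length + (p + 1) + w2.length := by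
        simp only [List.length_append, hulen]
      have hk1 := hk (1 + w1.length) (by omega)
      have hk2 := hk (1 + w1.length + p) (by omega)
      have hmodeq : (1 + w1.length) % (c0.length + 1) = (1 + w1.length + p) % (c0.length + 1) := by
        rw [hp, Nat.add_mod_right]
      have e0 := huocc ⟨0, by rw [hulen]; omega⟩
      have e0' := huy ⟨0, by rw [hulen]; omega⟩
      have ep := huocc ⟨p, by rw [hulen]; omega⟩
      have ep' := huy ⟨p, by rw [hulen]; omega⟩
      have q1 : x t = y (i + ((1 + w1.length : ℕ) : ℤ)) := by
        rw [show x t = x (t + ((0 : ℕ) : ℤ)) by simp, e0, ← e0']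
        congr 1
        push_cast; ring
      have q2 : x (t + ((c0.length : ℤ) + 1)) = y (i + ((1 + w1.length + p : ℕ) : ℤ)) := by
        rw [show x (t + ((c0.length : ℤ) + 1)) = x (t + ((p : ℕ) : ℤ)) by rw [hp]; push_cast; ring,
          ep, ← ep']
        congr 1
        push_cast; ring
      rw [q1, q2, hk1, hk2, hmodeq]
    -- hence X is finite, contradiction with hinf
    have hper2 : ∀ x ∈ X, ∀ i k : ℤ, x (i + ((c0.length : ℤ) + 1) * k) = x i := by
      intro x hx i k
      induction k using Int.induction_on with
      | zero => simp
      | succ k ihk =>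
        have h := per x hx (i + ((c0.length : ℤ) + 1) * k)
        have heq : i + ((c0.length : ℤ) + 1) * k + ((c0.length : ℤ) + 1)
            = i + ((c0.length : ℤ) + 1) * ((k : ℤ) + 1) := by ring
        rw [heq] at h
        rw [h, ihk]
      | pred k ihk =>
        have h := per x hx (i + ((c0.length : ℤ) + 1) * (-(k : ℤ) - 1))
        have heq : i + ((c0.length : ℤ) + 1) * (-(k : ℤ) - 1) + ((c0.length : ℤ) + 1)
            = i + ((c0.length : ℤ) + 1) * (-(k : ℤ)) := by ring
        rw [heq] at h
        rw [h] at ihk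
        exact ihk
    have hfin : Finite ↥X := by
      set c : ℤ := (c0.length : ℤ) + 1 with hc
      have hcpos : 0 < c := by positivity
      have hinj : Function.Injective
          (fun (x : ↥X) (k : Fin (c0.length + 1)) => (x : ℤ → A) ((k : ℕ) : ℤ)) := by
        intro x y hxy
        apply Subtype.ext
        funext i
        have h0 : 0 ≤ i % c := Int.emod_nonneg i (by omega)
        have h1 : i % c < c := Int.emod_lt_of_pos i hcpos
        have hklt : (i % c).toNat < c0.length + 1 := by omega
        have hcast : (((i % c).toNat : ℕ) : ℤ) = i % c := Int.toNat_of_nonneg h0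
        have hxmod : ∀ z : ℤ → A, z ∈ X → z i = z (i % c) := by
          intro z hz
          calc z i = z (i % c + c * (i / c)) := by rw [Int.emod_add_mul_ediv]
            _ = z (i % c) := hper2 z hz (i % c) (i / c)
        have := congrFun hxy ⟨(i % c).toNat, hklt⟩
        simp only at this
        rw [hcast] at this
        rw [hxmod x x.2, hxmod y y.2, this]
      exact Finite.of_injective _ hinj
    exact hinf (Set.finite_coe_iff.mp hfin)
end

section
/- Suppose X is a synchronized system with infinitely many points and φ is a flip for (X, σ_X). If there is a point x ∈ X such that φ(x) = x and some finitary block of X appears in x, then A(φ) ≠ ∅. -/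
open Set Function

section Aux

variable {A : Type*}

lemma aux_occursAt_iff {w : List A} {x : ℤ → A} {c : ℤ} :
    OccursAt w x c ↔ ∀ (s : ℕ) (_ : s < w.length), x (c + s) = w[s] := by
  constructor
  · intro H s h
    simpa [List.get_eq_getElem] using H ⟨s, h⟩
  · intro H k
    simpa [List.get_eq_getElem] using H k k.2

lemma aux_occursAt_append {u v : List A} {x : ℤ → A} {c : ℤ}
    (hu : OccursAt u x c) (hv : OccursAt v x (c + u.length)) :
    OccursAt (u ++ v) x c := by
  rw [aux_occursAt_iff] at hu hv ⊢
  intro s h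
  rcases lt_or_ge s u.length with h1 | h1
  · rw [List.getElem_append_left h1]
    exact hu s h1
  · rw [List.getElem_append_right h1]
    have hlen : s - u.length < v.length := by
      simp [List.length_append] at h; omega
    have := hv (s - u.length) hlen
    rw [show c + (s : ℤ) = c + (u.length : ℤ) + ((s - u.length : ℕ) : ℤ) by push_cast; omega]
    exact this

lemma aux_occursAt_append_left {u v : List A} {x : ℤ → A} {c : ℤ}
    (h : OccursAt (u ++ v) x c) : OccursAt u x c := by
  rw [aux_occursAt_iff] at h ⊢
  intro s hs
  have hlt : s < (u ++ v).length := by simp [List.length_append]; omega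
  have := h s hlt
  rwa [List.getElem_append_left hs] at this

lemma aux_occursAt_append_right {u v : List A} {x : ℤ → A} {c : ℤ}
    (h : OccursAt (u ++ v) x c) : OccursAt v x (c + u.length) := by
  rw [aux_occursAt_iff] at h ⊢
  intro s hs
  have hlt : u.length + s < (u ++ v).length := by simp [List.length_append]; omega
  have := h (u.length + s) hlt
  rw [List.getElem_append_right (by omega)] at this
  simpa [show c + (u.length : ℤ) + (s : ℤ) = c + ((u.length + s : ℕ) : ℤ) by push_cast; ring,
    Nat.add_sub_cancel_left] using this

lemma aux_occursAt_ofFn (x : ℤ → A) (c : ℤ) (n : ℕ) :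
    OccursAt (List.ofFn fun s : Fin n => x (c + (s : ℕ))) x c := by
  rw [aux_occursAt_iff]
  intro s hs
  rw [List.getElem_ofFn]

lemma aux_agree_of_occurs {w : List A} {x y : ℤ → A} {c : ℤ}
    (hx : OccursAt w x c) (hy : OccursAt w y c) {j : ℤ}
    (h1 : c ≤ j) (h2 : j < c + w.length) : x j = y j := by
  rw [aux_occursAt_iff] at hx hy
  have hlt : (j - c).toNat < w.length := by omega
  have hx' := hx _ hlt
  have hy' := hy _ hlt
  rw [show c + (((j - c).toNat : ℕ) : ℤ) = j by omega] at hx' hy'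
  exact hx'.trans hy'.symm

lemma aux_occursAt_of_agree {w : List A} {x y : ℤ → A} {c : ℤ}
    (hx : OccursAt w x c) (h : ∀ j, c ≤ j → j < c + w.length → y j = x j) :
    OccursAt w y c := by
  rw [aux_occursAt_iff] at hx ⊢
  intro s hs
  rw [h (c + s) (by omega) (by omega)]
  exact hx s hs

lemma aux_shiftZ_apply (m : ℤ) (x : ℤ → A) (i : ℤ) : shiftZ A m x i = x (i + m) := rfl

lemma aux_periodic_mul {f : ℤ → A} {k : ℤ} (h : ∀ j, f (j + k) = f j) :
    ∀ (m j : ℤ), f (j + m * k) = f j := by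
  intro m
  induction m using Int.induction_on with
  | zero => simp
  | succ n ih =>
    intro j
    rw [show j + ((n : ℤ) + 1) * k = (j + k) + (n : ℤ) * k by ring, ih (j + k), h j]
  | pred n ih =>
    intro j
    rw [show j + (-(n : ℤ) - 1) * k = (j - k) + (-(n : ℤ)) * k by ring, ih (j - k)]
    have := h (j - k)
    rw [show j - k + k = j by ring] at this
    exact this.symm

lemma aux_occursAt_periodic {w : List A} {f : ℤ → A} {c k : ℤ}
    (hp : ∀ (m j : ℤ), f (j + m * k) = f j) (h : OccursAt w f c) (m : ℤ) :
    OccursAt w f (c + m * k) := by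
  rw [aux_occursAt_iff] at h ⊢
  intro s hs
  rw [show c + m * k + (s : ℤ) = (c + s) + m * k by ring, hp m (c + s)]
  exact h s hs

section Topo

variable [TopologicalSpace A]

lemma aux_shift_mem {X : Set (ℤ → A)} (hX : shiftMap A '' X = X) :
    ∀ m : ℤ, ∀ y ∈ X, shiftZ A m y ∈ X := by
  have h1 : ∀ y ∈ X, shiftZ A 1 y ∈ X := by
    intro y hy
    have : shiftZ A 1 y ∈ shiftMap A '' X := Set.mem_image_of_mem _ hy
    rwa [hX] at this
  have hneg : ∀ y ∈ X, shiftZ A (-1) y ∈ X := by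
    intro y hy
    rw [← hX] at hy
    obtain ⟨z, hz, rfl⟩ := hy
    have : shiftZ A (-1) (shiftMap A z) = z := by
      funext i; simp [shiftZ, shiftMap]
    rw [this]
    exact hz
  intro m
  induction m using Int.induction_on with
  | zero =>
    intro y hy
    have : shiftZ A 0 y = y := by funext i; simp [shiftZ]
    rwa [this]
  | succ n ih =>
    intro y hy
    have : shiftZ A ((n : ℤ) + 1) y = shiftZ A 1 (shiftZ A n y) := by
      funext i; simp [shiftZ]; ring_nf
    rw [this]
    exact h1 _ (ih y hy)
  | pred n ih =>
    intro y hy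
    have : shiftZ A (-(n : ℤ) - 1) y = shiftZ A (-1) (shiftZ A (-(n:ℤ)) y) := by
      funext i; simp [shiftZ]; ring_nf
    rw [this]
    exact hneg _ (ih y hy)

lemma aux_block_realize {X : Set (ℤ → A)} (hXs : shiftMap A '' X = X)
    {w : List A} (hw : IsBlockOf X w) (c : ℤ) : ∃ z ∈ X, OccursAt w z c := by
  obtain ⟨z, hz, c₀, hc₀⟩ := hw
  refine ⟨shiftZ A (c₀ - c) z, aux_shift_mem hXs _ z hz, ?_⟩
  rw [aux_occursAt_iff] at hc₀ ⊢
  intro s hs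
  rw [aux_shiftZ_apply, show c + (s:ℤ) + (c₀ - c) = c₀ + s by ring]
  exact hc₀ s hs

lemma aux_mem_of_approx {X : Set (ℤ → A)} (hXc : IsClosed X)
    {y : ℤ → A} (h : ∀ T : ℕ, ∃ z ∈ X, ∀ j : ℤ, |j| ≤ (T : ℤ) → z j = y j) : y ∈ X := by
  rw [← hXc.closure_eq]
  rw [mem_closure_iff]
  intro U hU hyU
  obtain ⟨I, u, hI, hsub⟩ := isOpen_pi_iff.mp hU y hyU
  obtain ⟨z, hzX, hz⟩ := h (I.sup fun j => j.natAbs)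
  refine ⟨z, hsub ?_, hzX⟩
  intro a ha
  have hle : a.natAbs ≤ I.sup fun j => j.natAbs := Finset.le_sup ha
  have habs : |a| = (a.natAbs : ℤ) := Int.abs_eq_natAbs a
  rw [hz a (by omega)]
  exact (hI a ha).2

lemma aux_flip_shift {X : Set (ℤ → A)} {φ : (ℤ → A) → ℤ → A}
    (hXs : shiftMap A '' X = X) (hmap : Set.MapsTo φ X X)
    (hcomm : ∀ x ∈ X, φ (shiftMap A x) = shiftInv A (φ x)) :
    ∀ m : ℤ, ∀ y ∈ X, φ (shiftZ A m y) = shiftZ A (-m) (φ y) := by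
  have hstep : ∀ y ∈ X, φ (shiftZ A 1 y) = shiftZ A (-1) (φ y) := hcomm
  have hinvstep : ∀ y ∈ X, φ (shiftZ A (-1) y) = shiftZ A 1 (φ y) := by
    intro y hy
    have hmem : shiftZ A (-1) y ∈ X := aux_shift_mem hXs (-1) y hy
    have h1 := hstep _ hmem
    have h2 : shiftZ A 1 (shiftZ A (-1) y) = y := by funext i; simp [shiftZ]
    rw [h2] at h1
    have := congrArg (shiftZ A 1) h1
    have h3 : shiftZ A 1 (shiftZ A (-1) (φ (shiftZ A (-1) y))) = φ (shiftZ A (-1) y) := by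
      funext i; simp [shiftZ]
    rw [h3] at this
    exact this.symm
  intro m
  induction m using Int.induction_on with
  | zero =>
    intro y hy
    have h0 : shiftZ A 0 y = y := by funext i; simp [shiftZ]
    have h0' : shiftZ A (-0 : ℤ) (φ y) = φ y := by funext i; simp [shiftZ]
    rw [h0, h0']
  | succ n ih =>
    intro y hy
    have e1 : shiftZ A ((n : ℤ) + 1) y = shiftZ A 1 (shiftZ A n y) := by
      funext i; simp [shiftZ]; ring_nf
    rw [e1, hstep _ (aux_shift_mem hXs n y hy), ih y hy]
    funext i; simp [shiftZ]; ring_nf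
  | pred n ih =>
    intro y hy
    have e1 : shiftZ A (-(n : ℤ) - 1) y = shiftZ A (-1) (shiftZ A (-(n:ℤ)) y) := by
      funext i; simp [shiftZ]; ring_nf
    rw [e1, hinvstep _ (aux_shift_mem hXs (-(n:ℤ)) y hy), ih y hy]
    funext i; simp [shiftZ]; ring_nf

lemma aux_finitary_super {X : Set (ℤ → A)} {w u v : List A}
    (hw : IsFinitary X w) (hB : IsBlockOf X (u ++ w ++ v)) :
    IsFinitary X (u ++ w ++ v) := by
  refine ⟨hB, ?_⟩
  intro a b ha hb
  have h1 : IsBlockOf X ((a ++ u) ++ w) := by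
    obtain ⟨z, hz, c, hc⟩ := ha
    rw [show a ++ (u ++ w ++ v) = ((a ++ u) ++ w) ++ v by simp [List.append_assoc]] at hc
    exact ⟨z, hz, c, aux_occursAt_append_left hc⟩
  have h2 : IsBlockOf X (w ++ (v ++ b)) := by
    obtain ⟨z, hz, c, hc⟩ := hb
    rw [show (u ++ w ++ v) ++ b = u ++ (w ++ (v ++ b)) by simp [List.append_assoc]] at hc
    exact ⟨z, hz, _, aux_occursAt_append_right hc⟩
  have h3 := hw.2 _ _ h1 h2
  rw [show (a ++ u) ++ w ++ (v ++ b) = a ++ (u ++ w ++ v) ++ b by simp [List.append_assoc]] at h3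
  exact h3

lemma aux_locality [Fintype A] [DiscreteTopology A]
    {X : Set (ℤ → A)} (hXc : IsClosed X) (φ : (ℤ → A) → ℤ → A)
    (hc : ContinuousOn φ X) :
    ∃ N : ℕ, ∀ y ∈ X, ∀ z ∈ X, (∀ j : ℤ, |j| ≤ (N : ℤ) → y j = z j) → φ y 0 = φ z 0 := by
  by_contra hcon
  push_neg at hcon
  set E : ℕ → Set ((ℤ → A) × (ℤ → A)) := fun n =>
    ((X ×ˢ X) ∩ (fun v : (ℤ → A) × (ℤ → A) => (φ v.1 0, φ v.2 0)) ⁻¹' {p : A × A | p.1 ≠ p.2}) ∩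
      ⋂ (j : ℤ) (_ : |j| ≤ (n : ℤ)), {v : (ℤ → A) × (ℤ → A) | v.1 j = v.2 j} with hE
  have hgc : ContinuousOn (fun v : (ℤ → A) × (ℤ → A) => (φ v.1 0, φ v.2 0)) (X ×ˢ X) := by
    apply ContinuousOn.prodMk
    · exact (continuous_apply (0:ℤ)).comp_continuousOn
        (hc.comp continuous_fst.continuousOn (fun v hv => hv.1))
    · exact (continuous_apply (0:ℤ)).comp_continuousOn
        (hc.comp continuous_snd.continuousOn (fun v hv => hv.2))
  have hclosed : ∀ n, IsClosed (E n) := by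
    intro n
    apply IsClosed.inter
    · exact hgc.preimage_isClosed_of_isClosed ((hXc.prod hXc))
        (isClosed_discrete _)
    · exact isClosed_iInter fun j => isClosed_iInter fun _ =>
        isClosed_eq ((continuous_apply j).comp continuous_fst)
          ((continuous_apply j).comp continuous_snd)
  have hne : ∀ n, (E n).Nonempty := by
    intro n
    obtain ⟨y, hy, z, hz, hag, hne⟩ := hcon n
    refine ⟨(y, z), ⟨⟨⟨hy, hz⟩, hne⟩, ?_⟩⟩
    simp only [Set.mem_iInter]
    intro j hj
    exact hag j hj
  have hsub : ∀ n, E (n + 1) ⊆ E n := by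
    intro n v hv
    refine ⟨hv.1, ?_⟩
    have := hv.2
    simp only [Set.mem_iInter] at this ⊢
    intro j hj
    exact this j (by omega)
  have hcpt : IsCompact (E 0) := (hclosed 0).isCompact
  obtain ⟨v, hv⟩ := IsCompact.nonempty_iInter_of_sequence_nonempty_isCompact_isClosed
    E hsub hne hcpt hclosed
  have h12 : v.1 = v.2 := by
    funext j
    have := Set.mem_iInter.mp hv j.natAbs
    have h2 := (this).2
    simp only [Set.mem_iInter] at h2
    exact h2 j (le_of_eq (Int.abs_eq_natAbs j))
  have hv0 := (Set.mem_iInter.mp hv 0).1.2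
  simp only [Set.mem_preimage, Set.mem_setOf_eq] at hv0
  rw [h12] at hv0
  exact hv0 rfl

end Topo

end Aux

set_option maxHeartbeats 2000000 in
/-- **Lemma 2.3.** Suppose `X` is an infinite synchronized system and `φ` is a flip for
`(X, σ_X)`. If there is a point `x ∈ X` such that `φ(x) = x` and some finitary block of
`X` appears in `x`, then `A(φ) ≠ ∅`. -/
theorem flipAsym_nonempty_of_fixed_point
    {A : Type*} [Fintype A] [TopologicalSpace A] [DiscreteTopology A]
    (X : Set (ℤ → A)) (hX : IsSynchronized X) (hinf : X.Infinite)
    (φ : (ℤ → A) → ℤ → A) (hφ : IsFlip X φ)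
    (x : ℤ → A) (hx : x ∈ X) (hfix : φ x = x)
    (hw : ∃ w : List A, IsFinitary X w ∧ ∃ i : ℤ, OccursAt w x i) :
    (flipAsym X φ).Nonempty := by
  classical
  obtain ⟨hXss, hXirr, -⟩ := hX
  obtain ⟨-, hXcl, hXsh⟩ := hXss
  obtain ⟨w, hwfin, i, hwocc⟩ := hw
  obtain ⟨hφmap, hφcont, hφinv, hφcomm⟩ := hφ
  obtain ⟨N, hN⟩ := aux_locality hXcl φ hφcont
  have hmem_shift : ∀ m : ℤ, ∀ y ∈ X, shiftZ A m y ∈ X := aux_shift_mem hXsh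
  have hflip_shift : ∀ m : ℤ, ∀ y ∈ X, φ (shiftZ A m y) = shiftZ A (-m) (φ y) :=
    aux_flip_shift hXsh hφmap hφcomm
  -- locality at arbitrary coordinates
  have hLoc : ∀ y ∈ X, ∀ z ∈ X, ∀ j : ℤ,
      (∀ l : ℤ, |l + j| ≤ (N : ℤ) → y l = z l) → φ y j = φ z j := by
    intro y hy z hz j hag
    have h1 := hflip_shift (-j) y hy
    have h2 := hflip_shift (-j) z hz
    have h3 : ∀ l : ℤ, |l| ≤ (N : ℤ) → shiftZ A (-j) y l = shiftZ A (-j) z l := by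
      intro l hl
      rw [aux_shiftZ_apply, aux_shiftZ_apply]
      apply hag
      rw [show l + -j + j = l by ring]
      exact hl
    have h4 := hN _ (hmem_shift (-j) y hy) _ (hmem_shift (-j) z hz) h3
    rw [h1, h2, aux_shiftZ_apply, aux_shiftZ_apply,
      show (0:ℤ) + -(-j) = j by ring] at h4
    exact h4
  -- the constants
  set M : ℕ := N + 1 + i.natAbs + w.length with hMdef
  set MN : ℕ := 1 + i.natAbs + w.length with hMNdef
  have hMN' : (MN : ℤ) = (M : ℤ) - N := by simp only [hMdef, hMNdef]; omega
  -- the word W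
  set aW : ℕ := (i + (M : ℤ)).toNat with haWdef
  set bW : ℕ := ((M : ℤ) - i - w.length + 1).toNat with hbWdef
  have haW' : (aW : ℤ) = i + M := by
    rw [haWdef]; rw [Int.toNat_of_nonneg (by simp only [hMdef]; omega)]
  have hbW' : (bW : ℤ) = (M : ℤ) - i - w.length + 1 := by
    rw [hbWdef]; rw [Int.toNat_of_nonneg (by simp only [hMdef]; omega)]
  set W : List A := (List.ofFn fun s : Fin aW => x (-(M : ℤ) + (s : ℕ))) ++ w ++
      (List.ofFn fun s : Fin bW => x (i + (w.length : ℤ) + (s : ℕ))) with hWdef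
  have hWlen : (W.length : ℤ) = 2 * (M : ℤ) + 1 := by
    simp only [hWdef, List.length_append, List.length_ofFn]
    push_cast
    omega
  have hWocc : OccursAt W x (-(M : ℤ)) := by
    rw [hWdef]
    apply aux_occursAt_append
    · apply aux_occursAt_append
      · exact aux_occursAt_ofFn x (-(M : ℤ)) aW
      · rw [show -(M:ℤ) + ((List.ofFn fun s : Fin aW => x (-(M : ℤ) + (s : ℕ))).length : ℤ) = i by
          simp only [List.length_ofFn]; omega]
        exact hwocc
    · rw [show -(M:ℤ) + (((List.ofFn fun s : Fin aW => x (-(M : ℤ) + (s : ℕ))) ++ w).length : ℤ)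
          = i + (w.length : ℤ) by
        simp only [List.length_append, List.length_ofFn]; push_cast; omega]
      exact aux_occursAt_ofFn x (i + (w.length : ℤ)) bW
  have hWblock : IsBlockOf X W := ⟨x, hx, -(M : ℤ), hWocc⟩
  have hWfin : IsFinitary X W := by
    rw [hWdef]; exact aux_finitary_super hwfin (hWdef ▸ hWblock)
  -- the word V
  set aV : ℕ := (i + (MN : ℤ)).toNat with haVdef
  set bV : ℕ := ((MN : ℤ) - i - w.length + 1).toNat with hbVdef
  have haV' : (aV : ℤ) = i + MN := by
    rw [haVdef]; rw [Int.toNat_of_nonneg (by simp only [hMNdef]; omega)]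
  have hbV' : (bV : ℤ) = (MN : ℤ) - i - w.length + 1 := by
    rw [hbVdef]; rw [Int.toNat_of_nonneg (by simp only [hMNdef]; omega)]
  set V : List A := (List.ofFn fun s : Fin aV => x (-(MN : ℤ) + (s : ℕ))) ++ w ++
      (List.ofFn fun s : Fin bV => x (i + (w.length : ℤ) + (s : ℕ))) with hVdef
  have hVlen : (V.length : ℤ) = 2 * (MN : ℤ) + 1 := by
    simp only [hVdef, List.length_append, List.length_ofFn]
    push_cast
    omega
  have hVocc : OccursAt V x (-(MN : ℤ)) := by
    rw [hVdef]
    apply aux_occursAt_append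
    · apply aux_occursAt_append
      · exact aux_occursAt_ofFn x (-(MN : ℤ)) aV
      · rw [show -(MN:ℤ) + ((List.ofFn fun s : Fin aV => x (-(MN : ℤ) + (s : ℕ))).length : ℤ) = i by
          simp only [List.length_ofFn]; omega]
        exact hwocc
    · rw [show -(MN:ℤ) + (((List.ofFn fun s : Fin aV => x (-(MN : ℤ) + (s : ℕ))) ++ w).length : ℤ)
          = i + (w.length : ℤ) by
        simp only [List.length_append, List.length_ofFn]; push_cast; omega]
      exact aux_occursAt_ofFn x (i + (w.length : ℤ)) bV
  have hVblock : IsBlockOf X V := ⟨x, hx, -(MN : ℤ), hVocc⟩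
  have hVfin : IsFinitary X V := by
    rw [hVdef]; exact aux_finitary_super hwfin (hVdef ▸ hVblock)
  -- the period
  obtain ⟨r, hr⟩ := hXirr W W hWblock hWblock
  set Wr : List A := W ++ r with hWrdef
  set K : ℕ := Wr.length with hKdef
  set k : ℤ := (K : ℤ) with hkdef
  have hWrK : ((Wr.length : ℕ) : ℤ) = k := by rw [hkdef, hKdef]
  have hk1 : 1 ≤ k := by
    rw [hkdef, hKdef, hWrdef]
    have : W.length ≠ 0 := by omega
    simp only [List.length_append]
    omega
  have hWk : (W.length : ℤ) ≤ k := by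
    rw [hkdef, hKdef, hWrdef]; simp only [List.length_append]; push_cast; omega
  -- the periodic point p
  set p : ℤ → A := fun j => Wr.getD ((j + (M : ℤ)) % k).toNat (x 0) with hpdef
  have hmodlt : ∀ j : ℤ, 0 ≤ (j + (M : ℤ)) % k ∧ (j + (M : ℤ)) % k < k := by
    intro j
    exact ⟨Int.emod_nonneg _ (by omega), Int.emod_lt_of_pos _ (by omega)⟩
  have hp_per : ∀ (m j : ℤ), p (j + m * k) = p j := by
    intro m j
    simp only [hpdef]
    congr 2
    rw [show j + m * k + (M : ℤ) = (j + (M:ℤ)) + k * m by ring]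
    exact Int.add_mul_emod_self_left ..
  have hWr_occ_p : ∀ m : ℤ, OccursAt Wr p (-(M : ℤ) + m * k) := by
    intro m
    rw [aux_occursAt_iff]
    intro s hs
    simp only [hpdef]
    have h1 : (-(M:ℤ) + m * k + s + M) % k = (s : ℤ) := by
      rw [show -(M:ℤ) + m * k + s + M = (s : ℤ) + k * m by ring,
        Int.add_mul_emod_self_left ((s:ℤ)) k m]
      exact Int.emod_eq_of_lt (by omega) (by rw [hkdef, hKdef]; exact_mod_cast hs)
    rw [h1, Int.toNat_natCast]
    exact List.getD_eq_getElem Wr (x 0) hs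
  have hW_occ_p : OccursAt W p (-(M : ℤ)) := by
    have h1 := hWr_occ_p 0
    rw [show -(M:ℤ) + 0 * k = -(M:ℤ) by ring, hWrdef] at h1
    exact aux_occursAt_append_left h1
  have hpx : ∀ j : ℤ, -(M : ℤ) ≤ j → j ≤ (M : ℤ) → p j = x j := by
    intro j h1 h2
    exact aux_agree_of_occurs hW_occ_p hWocc h1 (by omega)
  -- p belongs to X
  set B : ℕ → List A := fun n => (List.replicate n Wr).flatten ++ W with hBdef
  have hB0 : B 0 = W := by simp [hBdef]
  have hBsucc : ∀ n, B (n + 1) = Wr ++ B n := by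
    intro n
    simp [hBdef, List.replicate_succ, List.append_assoc]
  have hBlen : ∀ n : ℕ, ((B n).length : ℤ) = n * k + W.length := by
    intro n
    induction n with
    | zero => rw [hB0]; push_cast; ring
    | succ n ih =>
      rw [hBsucc, List.length_append]
      push_cast
      push_cast at ih
      rw [hWrK] at *
      linarith [ih]
  have hBprop : ∀ n : ℕ, (∃ t, B n = W ++ t) ∧ IsBlockOf X (B n) := by
    intro n
    induction n with
    | zero => exact ⟨⟨[], by simp [hB0]⟩, by rw [hB0]; exact hWblock⟩
    | succ n ih =>
      obtain ⟨⟨t, ht⟩, hblk⟩ := ih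
      have h1 : IsBlockOf X ((W ++ r) ++ W ++ t) := by
        apply hWfin.2 (W ++ r) t hr
        rw [← ht]; exact hblk
      constructor
      · exact ⟨r ++ B n, by rw [hBsucc, hWrdef, List.append_assoc]⟩
      · rw [hBsucc, hWrdef, ht,
          show (W ++ r) ++ (W ++ t) = (W ++ r) ++ W ++ t by simp [List.append_assoc]]
        exact h1
  have hB_occ : ∀ n : ℕ, ∀ m : ℤ, OccursAt (B n) p (-(M : ℤ) + m * k) := by
    intro n
    induction n with
    | zero => intro m; rw [hB0]; exact hWdef ▸ (by
        have h1 := hWr_occ_p m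
        rw [hWrdef] at h1
        exact aux_occursAt_append_left h1)
    | succ n ih =>
      intro m
      rw [hBsucc]
      apply aux_occursAt_append (hWr_occ_p m)
      have h2 := ih (m + 1)
      rw [show -(M:ℤ) + (m + 1) * k = -(M:ℤ) + m * k + k by ring] at h2
      rw [hWrK]
      exact h2
  have hpX : p ∈ X := by
    apply aux_mem_of_approx hXcl
    intro T
    set n : ℕ := 2 * (T + M) + 1 with hndef
    obtain ⟨z, hzX, hocc⟩ :=
      aux_block_realize hXsh (hBprop n).2 (-(M : ℤ) + (-(T + M : ℤ)) * k)
    refine ⟨z, hzX, fun j hj => ?_⟩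
    have hj' := abs_le.mp hj
    have hkn1 : ((T:ℤ) + M) * 1 ≤ ((T:ℤ) + M) * k := by
      apply mul_le_mul_of_nonneg_left hk1 (by positivity)
    have hkn2 : ((T:ℤ) + M + 1) * 1 ≤ ((T:ℤ) + M + 1) * k := by
      apply mul_le_mul_of_nonneg_left hk1 (by positivity)
    apply aux_agree_of_occurs hocc (hB_occ n (-(T + M : ℤ)))
    · nlinarith [hj'.1]
    · have h3 := hBlen n
      have h4 : ((n:ℕ) : ℤ) = 2 * ((T:ℤ) + M) + 1 := by rw [hndef]; push_cast; ring
      nlinarith [hj'.2]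
  -- the flipped point q
  set q : ℤ → A := φ p with hqdef
  have hqX : q ∈ X := hφmap hpX
  have hφq : φ q = p := hφinv p hpX
  have hq_per1 : ∀ j : ℤ, q (j + k) = q j := by
    have h2 : shiftZ A (-k) p = p := by
      funext j
      rw [aux_shiftZ_apply, show j + -k = j + (-1) * k by ring]
      exact hp_per (-1) j
    have h1 := hflip_shift (-k) p hpX
    rw [h2] at h1
    intro j
    have h3 := congrFun h1.symm j
    rw [aux_shiftZ_apply, show j + -(-k) = j + k by ring] at h3
    exact h3
  have hq_per : ∀ (m j : ℤ), q (j + m * k) = q j := aux_periodic_mul hq_per1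
  have hqx : ∀ j : ℤ, |j| ≤ (M : ℤ) - N → q j = x j := by
    intro j hj
    have hj' := abs_le.mp hj
    have h1 : φ p j = φ x j := by
      apply hLoc p hpX x hx j
      intro l hl
      have hl' := abs_le.mp hl
      exact hpx l (by omega) (by omega)
    rw [hqdef]
    rw [h1, hfix]
  -- V occurrences in p and q
  have hVocc_p : OccursAt V p (-(MN : ℤ)) := by
    apply aux_occursAt_of_agree hVocc
    intro j h1 h2
    exact hpx j (by omega) (by omega)
  have hVocc_q : OccursAt V q (-(MN : ℤ)) := by
    apply aux_occursAt_of_agree hVocc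
    intro j h1 h2
    exact hqx j (by rw [abs_le]; omega)
  have hVocc_pm : ∀ m : ℤ, OccursAt V p (-(MN : ℤ) + m * k) :=
    fun m => aux_occursAt_periodic hp_per hVocc_p m
  have hVocc_qm : ∀ m : ℤ, OccursAt V q (-(MN : ℤ) + m * k) :=
    fun m => aux_occursAt_periodic hq_per hVocc_q m
  -- dichotomy
  by_cases hall : ∀ u : List A, IsBlockOf X u → ∃ c : ℤ, OccursAt u p c
  · -- then X is finite: contradiction
    exfalso
    have hfin : ∀ y' ∈ X, ∃ r' : Fin K, y' = fun j => p (j + ((r' : ℕ) : ℤ)) := by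
      intro y' hy'
      have hβ : ∀ n : ℕ, ∃ c : ℤ,
          OccursAt (List.ofFn fun s : Fin (2 * n + 1) => y' (-(n : ℤ) + (s : ℕ))) p c :=
        fun n => hall _ ⟨y', hy', -(n : ℤ), aux_occursAt_ofFn y' (-(n : ℤ)) (2 * n + 1)⟩
      choose c hc using hβ
      have hag : ∀ n : ℕ, ∀ j : ℤ, |j| ≤ (n : ℤ) → y' j = p (j + (c n + n)) := by
        intro n j hj
        have hj' := abs_le.mp hj
        have h1 := aux_occursAt_ofFn y' (-(n : ℤ)) (2 * n + 1)
        have h2 : OccursAt (List.ofFn fun s : Fin (2 * n + 1) => y' (-(n : ℤ) + (s : ℕ)))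
            (fun j => p (j + (c n + n))) (-(n : ℤ)) := by
          rw [aux_occursAt_iff]
          intro s hs
          have h3 := aux_occursAt_iff.mp (hc n) s hs
          show p ((-(n:ℤ) + s) + (c n + n)) = _
          rw [show -(n:ℤ) + s + (c n + n) = c n + s by ring]
          exact h3
        have h4 := aux_agree_of_occurs h1 h2 (j := j) (by omega)
          (by simp only [List.length_ofFn]; push_cast; omega)
        exact h4
      have hmod : ∀ n : ℕ, ∀ j : ℤ, |j| ≤ (n : ℤ) → y' j = p (j + (c n + n) % k) := by
        intro n j hj
        rw [hag n j hj]
        have hdm := Int.mul_ediv_add_emod (c n + n) k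
        rw [show j + (c n + n) = (j + (c n + n) % k) + ((c n + n) / k) * k by linarith]
        exact hp_per _ _
      have hbd : ∀ n : ℕ, 0 ≤ (c n + n) % k ∧ (c n + n) % k < k :=
        fun n => ⟨Int.emod_nonneg _ (by omega), Int.emod_lt_of_pos _ (by omega)⟩
      set g : ℕ → Fin K := fun n => ⟨((c n + n) % k).toNat, by
        have h1 := (hbd n).1
        have h2 := (hbd n).2
        have h3 := hkdef
        omega⟩ with hgdef
      obtain ⟨r', hr'⟩ := Finite.exists_infinite_fiber g
      have hinf' : (g ⁻¹' {r'}).Infinite := Set.infinite_coe_iff.mp hr'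
      refine ⟨r', funext fun j => ?_⟩
      obtain ⟨n, hn1, hn2⟩ : ∃ n : ℕ, g n = r' ∧ j.natAbs ≤ n := by
        obtain ⟨n, hn⟩ := (hinf'.diff (Set.finite_Iio j.natAbs)).nonempty
        refine ⟨n, by simpa using hn.1, ?_⟩
        have := hn.2
        simp only [Set.mem_Iio, not_lt] at this
        exact this
      have h7 := hmod n j (by rw [Int.abs_eq_natAbs]; exact_mod_cast hn2)
      have h8 : (c n + n) % k = ((r' : ℕ) : ℤ) := by
        have h9 := congrArg Fin.val hn1
        simp only [hgdef] at h9
        have h10 := (hbd n).1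
        omega
      rw [h7, h8]
    have hXsub : X ⊆ Set.range (fun r' : Fin K => fun j : ℤ => p (j + ((r' : ℕ) : ℤ))) := by
      intro y' hy'
      obtain ⟨r', h⟩ := hfin y' hy'
      exact ⟨r', h.symm⟩
    exact hinf (Set.Finite.subset (Set.finite_range _) hXsub)
  · -- main construction
    push_neg at hall
    obtain ⟨u, huB, hup⟩ := hall
    obtain ⟨t₁, ht₁⟩ := hXirr V u hVblock huB
    obtain ⟨t₂, ht₂⟩ := hXirr (V ++ t₁ ++ u) V ht₁ hVblock
    set mw : List A := t₁ ++ u ++ t₂ with hmwdef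
    have hC : IsBlockOf X (V ++ mw ++ V) := by
      rw [show V ++ mw ++ V = (V ++ t₁ ++ u) ++ t₂ ++ V by rw [hmwdef]; simp [List.append_assoc]]
      exact ht₂
    have hD : IsBlockOf X (V ++ mw ++ V ++ mw ++ V) := by
      have h1 := hVfin.2 (V ++ mw) (mw ++ V) hC
        (by rw [show V ++ (mw ++ V) = V ++ mw ++ V by simp [List.append_assoc]]; exact hC)
      rw [show (V ++ mw) ++ V ++ (mw ++ V) = V ++ mw ++ V ++ mw ++ V by
        simp [List.append_assoc]] at h1
      exact h1
    set Dblk : List A := V ++ mw ++ V ++ mw ++ V with hDdef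
    set Lv : ℤ := (V.length : ℤ) with hLvdef
    have hLv1 : 1 ≤ Lv := by rw [hLvdef]; omega
    set δ : ℤ := Lv + mw.length with hδdef
    have hδL : Lv ≤ δ := by
      rw [hδdef]; linarith [Int.natCast_nonneg mw.length]
    have hδ0 : 0 ≤ δ := by omega
    have hDlen : ((Dblk.length : ℕ) : ℤ) = 2 * δ + Lv := by
      rw [hDdef]
      simp only [List.length_append]
      rw [hδdef, hLvdef]
      push_cast
      ring
    have hDpre : (((V ++ mw ++ V ++ mw).length : ℕ) : ℤ) = 2 * δ := by
      simp only [List.length_append]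
      rw [hδdef, hLvdef]
      push_cast
      ring
    set e : ℤ := (N : ℤ) + 1 + δ + MN with hedef
    set b : ℤ := -(MN : ℤ) - δ + e * k with hbdef
    have he0 : 0 ≤ e := by rw [hedef]; positivity
    have hbδ : b + δ = -(MN : ℤ) + e * k := by rw [hbdef]; ring
    have hb : (N : ℤ) + 1 ≤ b := by
      have h1 : e * 1 ≤ e * k := mul_le_mul_of_nonneg_left hk1 he0
      rw [hbdef, hedef]
      rw [hedef] at h1
      linarith
    set a : ℤ := b + 2 * δ with hadef
    -- V occurrences at the splice positions
    have hVq0 : OccursAt V q (b + δ) := by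
      have h1 := hVocc_qm e
      rw [← hbδ] at h1
      exact h1
    have hVp0 : OccursAt V p (b + δ) := by
      have h1 := hVocc_pm e
      rw [← hbδ] at h1
      exact h1
    have hVpm : ∀ m : ℤ, OccursAt V p (b + δ + m * k) := by
      intro m
      have h1 := hVocc_pm (e + m)
      rw [show -(MN:ℤ) + (e + m) * k = (-(MN:ℤ) + e * k) + m * k by ring, ← hbδ] at h1
      exact h1
    -- the point y
    set y : ℤ → A := fun j =>
      if j < b then q (j + δ)
      else if j < b + ((Dblk.length : ℕ) : ℤ) then Dblk.getD (j - b).toNat (x 0)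
      else p (j - δ) with hydef
    -- middle occurrence
    have hym : OccursAt Dblk y b := by
      rw [aux_occursAt_iff]
      intro s hs
      show (if b + (s:ℤ) < b then _ else if b + (s:ℤ) < b + ((Dblk.length : ℕ) : ℤ) then
        Dblk.getD (b + (s:ℤ) - b).toNat (x 0) else _) = _
      rw [if_neg (by omega), if_pos (by omega), show (b + (s:ℤ) - b).toNat = s by omega]
      exact List.getD_eq_getElem Dblk (x 0) hs
    have hyVb : OccursAt V y b := by
      have h1 := hym
      rw [show Dblk = V ++ (mw ++ V ++ mw ++ V) by rw [hDdef]; simp [List.append_assoc]] at h1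
      exact aux_occursAt_append_left h1
    have hyVa : OccursAt V y a := by
      have h1 := hym
      rw [show Dblk = (V ++ mw ++ V ++ mw) ++ V by rw [hDdef]] at h1
      have h2 := aux_occursAt_append_right h1
      rw [hDpre] at h2
      rw [hadef]
      exact h2
    have hyu : OccursAt u y (b + Lv + (t₁.length : ℤ)) := by
      have h1 := hym
      rw [show Dblk = (V ++ t₁) ++ u ++ (t₂ ++ V ++ mw ++ V) by
        rw [hDdef, hmwdef]; simp [List.append_assoc]] at h1
      have h2 := aux_occursAt_append_right (aux_occursAt_append_left h1)
      rw [show (((V ++ t₁).length : ℕ) : ℤ) = Lv + (t₁.length : ℤ) by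
        simp only [List.length_append]; rw [hLvdef]; push_cast; ring] at h2
      rw [show b + ((Lv : ℤ) + (t₁.length : ℤ)) = b + Lv + (t₁.length : ℤ) by ring] at h2
      exact h2
    -- left/right tail descriptions
    have hyl : ∀ j : ℤ, j ≤ b + Lv - 1 → y j = q (j + δ) := by
      intro j hj
      rcases lt_or_ge j b with h1 | h1
      · show (if j < b then q (j + δ) else _) = _
        rw [if_pos h1]
      · have h2 : OccursAt V (fun j' => q (j' + δ)) b := by
          rw [aux_occursAt_iff]
          intro s hs
          show q (b + (s:ℤ) + δ) = _
          rw [show b + (s:ℤ) + δ = b + δ + s by ring]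
          exact aux_occursAt_iff.mp hVq0 s hs
        exact aux_agree_of_occurs hyVb h2 h1 (by rw [← hLvdef]; omega)
    have hyr : ∀ j : ℤ, a ≤ j → y j = p (j - δ) := by
      intro j hj
      rcases lt_or_ge j (a + Lv) with h1 | h1
      · have h2 : OccursAt V (fun j' => p (j' - δ)) a := by
          rw [aux_occursAt_iff]
          intro s hs
          show p (a + (s:ℤ) - δ) = _
          rw [show a + (s:ℤ) - δ = b + δ + s by rw [hadef]; ring]
          exact aux_occursAt_iff.mp hVp0 s hs
        exact aux_agree_of_occurs hyVa h2 hj (by rw [← hLvdef]; omega)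
      · show (if j < b then _ else if j < b + ((Dblk.length : ℕ) : ℤ) then _ else p (j - δ)) = _
        rw [if_neg (by omega), if_neg (by rw [hDlen]; omega)]
    -- y is in X
    have hyX : y ∈ X := by
      apply aux_mem_of_approx hXcl
      intro T
      set n : ℕ := T + b.toNat + δ.toNat + V.length + 1 with hndef
      have hK0 : 0 < K := by have := hk1; have := hkdef; omega
      have hnk : (n : ℤ) ≤ ((n * K : ℕ) : ℤ) := by
        have h1 : n ≤ n * K := Nat.le_mul_of_pos_right n hK0
        exact_mod_cast h1
      have hnkk : ((n * K : ℕ) : ℤ) = (n : ℤ) * k := by rw [hkdef]; push_cast; ring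
      have hbtoNat : b ≤ (b.toNat : ℤ) := Int.self_le_toNat b
      have hδtoNat : δ ≤ (δ.toNat : ℤ) := Int.self_le_toNat δ
      have hncast : ((n:ℕ) : ℤ) = (T : ℤ) + b.toNat + δ.toNat + V.length + 1 := by
        rw [hndef]; push_cast; ring
      set LQ : List A := List.ofFn (fun s : Fin (n * K) => q ((b - ((n * K : ℕ) : ℤ) + δ) + (s : ℕ))) with hLQdef
      set RQ : List A := List.ofFn (fun s : Fin (n * K) => p ((b + δ + Lv) + (s : ℕ))) with hRQdef
      have hLQlen : ((LQ.length : ℕ) : ℤ) = ((n * K : ℕ) : ℤ) := by rw [hLQdef]; simp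
      have hRQlen : ((RQ.length : ℕ) : ℤ) = ((n * K : ℕ) : ℤ) := by rw [hRQdef]; simp
      have hLP : IsBlockOf X (LQ ++ V) := by
        refine ⟨q, hqX, b - ((n * K : ℕ) : ℤ) + δ, aux_occursAt_append ?_ ?_⟩
        · rw [hLQdef]; exact aux_occursAt_ofFn q _ _
        · rw [hLQlen, show b - ((n * K : ℕ) : ℤ) + δ + ((n * K : ℕ) : ℤ) = b + δ by ring]
          exact hVq0
      have hRP : IsBlockOf X (V ++ RQ) := by
        refine ⟨p, hpX, b + δ, aux_occursAt_append ?_ ?_⟩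
        · exact hVp0
        · rw [← hLvdef, show b + δ + Lv = b + δ + Lv by ring, hRQdef]
          exact aux_occursAt_ofFn p _ _
      have hH : IsBlockOf X ((V ++ mw ++ V ++ mw) ++ V ++ RQ) := by
        apply hVfin.2 (V ++ mw ++ V ++ mw) RQ _ hRP
        show IsBlockOf X ((V ++ mw ++ V ++ mw) ++ V)
        exact hD
      have hF : IsBlockOf X (LQ ++ Dblk ++ RQ) := by
        have h1 := hVfin.2 LQ (mw ++ V ++ mw ++ V ++ RQ) hLP
          (by rw [show V ++ (mw ++ V ++ mw ++ V ++ RQ) = (V ++ mw ++ V ++ mw) ++ V ++ RQ by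
            simp [List.append_assoc]]; exact hH)
        rw [show LQ ++ V ++ (mw ++ V ++ mw ++ V ++ RQ) = LQ ++ Dblk ++ RQ by
          rw [hDdef]; simp [List.append_assoc]] at h1
        exact h1
      have hFy : OccursAt (LQ ++ Dblk ++ RQ) y (b - ((n * K : ℕ) : ℤ)) := by
        apply aux_occursAt_append
        · apply aux_occursAt_append
          · rw [aux_occursAt_iff]
            intro s hs
            simp only [hLQdef, List.length_ofFn] at hs
            simp only [hLQdef, List.getElem_ofFn]
            show y (b - ((n * K : ℕ) : ℤ) + (s:ℤ)) = q ((b - ((n * K : ℕ) : ℤ) + δ) + (s:ℤ))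
            rw [hyl _ (by omega)]
            rw [show b - ((n * K : ℕ) : ℤ) + (s:ℤ) + δ = b - ((n * K : ℕ) : ℤ) + δ + (s:ℤ) by ring]
          · rw [hLQlen, show b - ((n * K : ℕ) : ℤ) + ((n * K : ℕ) : ℤ) = b by ring]
            exact hym
        · rw [show ((((LQ ++ Dblk).length : ℕ)) : ℤ) = ((n * K : ℕ) : ℤ) + (2 * δ + Lv) by
            simp only [List.length_append, Nat.cast_add]; omega]
          rw [aux_occursAt_iff]
          intro s hs
          simp only [hRQdef, List.length_ofFn] at hs
          simp only [hRQdef, List.getElem_ofFn]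
          show y (b - ((n * K : ℕ) : ℤ) + (((n * K : ℕ) : ℤ) + (2 * δ + Lv)) + (s:ℤ)) = _
          rw [show b - ((n * K : ℕ) : ℤ) + (((n * K : ℕ) : ℤ) + (2 * δ + Lv)) + (s:ℤ)
              = b + 2 * δ + Lv + s by ring]
          rw [hyr _ (by rw [hadef]; omega)]
          rw [show b + 2 * δ + Lv + (s:ℤ) - δ = b + δ + Lv + s by ring]
      obtain ⟨z, hzX, hzocc⟩ := aux_block_realize hXsh hF (b - ((n * K : ℕ) : ℤ))
      refine ⟨z, hzX, fun j hj => ?_⟩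
      have hj' := abs_le.mp hj
      apply aux_agree_of_occurs hzocc hFy
      · omega
      · rw [show (((LQ ++ Dblk ++ RQ).length : ℕ) : ℤ)
            = ((n * K : ℕ) : ℤ) + (2 * δ + Lv) + ((n * K : ℕ) : ℤ) by
          simp only [List.length_append, Nat.cast_add]; omega]
        omega
    -- the key flip computation
    have hC0 : ∀ j : ℤ, (N : ℤ) + 1 ≤ j → φ y j = p (j - δ) := by
      intro j hj
      have h1 : φ y j = φ (shiftZ A δ q) j := by
        apply hLoc y hyX _ (hmem_shift δ q hqX) j
        intro l hl
        have hl' := abs_le.mp hl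
        rw [aux_shiftZ_apply]
        exact hyl l (by omega)
      rw [h1, hflip_shift δ q hqX, aux_shiftZ_apply, hφq, show j + -δ = j - δ by ring]
    have hC1 : ∀ j : ℤ, a ≤ j → φ y j = y j := by
      intro j hj
      rw [hC0 j (by omega), hyr j hj]
    have hC2 : ∀ j : ℤ, j ≤ -a - N → φ y j = y j := by
      intro j hj
      have h1 : φ y j = φ (shiftZ A (-δ) p) j := by
        apply hLoc y hyX _ (hmem_shift (-δ) p hpX) j
        intro l hl
        have hl' := abs_le.mp hl
        rw [aux_shiftZ_apply, show l + -δ = l - δ by ring]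
        exact hyr l (by omega)
      rw [h1, hflip_shift (-δ) p hpX, aux_shiftZ_apply, show j + -(-δ) = j + δ by ring]
      rw [← hqdef]
      exact (hyl j (by omega)).symm
    -- nonempty difference
    have hnonempty : {i' : ℤ | φ y i' ≠ y i'}.Nonempty := by
      by_contra hcon2
      rw [Set.not_nonempty_iff_eq_empty] at hcon2
      have hally : ∀ j : ℤ, φ y j = y j := by
        intro j
        by_contra hne2
        exact (Set.eq_empty_iff_forall_notMem.mp hcon2 j) hne2
      apply hup (b + Lv + (t₁.length : ℤ) - δ)
      rw [aux_occursAt_iff]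
      intro s hs
      have h5 := hC0 (b + Lv + (t₁.length : ℤ) + s) (by omega)
      rw [hally _] at h5
      have h6 := aux_occursAt_iff.mp hyu s hs
      rw [h6] at h5
      rw [show b + Lv + (t₁.length : ℤ) - δ + s = b + Lv + (t₁.length : ℤ) + s - δ by ring]
      exact h5.symm
    -- finite difference
    have hfinite : {i' : ℤ | φ y i' ≠ y i'}.Finite := by
      apply Set.Finite.subset (Set.finite_Icc (-a - (N : ℤ)) a)
      intro j hj
      simp only [Set.mem_setOf_eq] at hj
      simp only [Set.mem_Icc]
      constructor
      · by_contra h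
        push_neg at h
        exact hj (hC2 j (by omega))
      · by_contra h
        push_neg at h
        exact hj (hC1 j (by omega))
    -- infinitely many V occurrences
    have hVinf : {i' : ℤ | OccursAt V y i'}.Infinite := by
      apply Set.infinite_of_injective_forall_mem
        (f := fun n : ℕ => b + 2 * δ + ((n : ℤ) + 1) * k)
      · intro n1 n2 h
        simp only at h
        have h1 : ((n1 : ℤ) + 1) * k = ((n2 : ℤ) + 1) * k := by linarith
        have h2 : ((n1 : ℤ) + 1) = ((n2 : ℤ) + 1) := mul_right_cancel₀ (by omega) h1
        omega
      · intro n
        simp only [Set.mem_setOf_eq]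
        rw [aux_occursAt_iff]
        intro s hs
        have hk2 : 0 ≤ ((n : ℤ) + 1) * k := by positivity
        rw [hyr _ (by rw [hadef]; omega)]
        rw [show b + 2 * δ + ((n:ℤ) + 1) * k + (s:ℤ) - δ = b + δ + ((n:ℤ) + 1) * k + s by ring]
        exact aux_occursAt_iff.mp (hVpm ((n:ℤ) + 1)) s hs
    exact ⟨y, hyX, ⟨V, hVfin, hVinf⟩, hnonempty, hfinite⟩
end

section
/- Let X be a shift space and φ a flip for (X, σ_X). Then for every m ∈ ℤ the map σ_X^m∘φ is a flip for (X, σ_X); if X is infinite, the flips σ_X^m∘φ, m ∈ ℤ, are pairwise distinct; and for all m, n ∈ ℤ with n − m even, the flips σ_X^m∘φ and σ_X^n∘φ are conjugate. -/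
open Set Function

lemma shiftZ_shiftZ {A : Type*} (m n : ℤ) (x : ℤ → A) :
    shiftZ A m (shiftZ A n x) = shiftZ A (m + n) x := by
  funext i; simp [shiftZ, add_assoc]

lemma shiftZ_zero {A : Type*} (x : ℤ → A) : shiftZ A 0 x = x := by
  funext i; simp [shiftZ]

lemma shiftZ_continuous {A : Type*} [TopologicalSpace A] (m : ℤ) :
    Continuous (shiftZ A m) :=
  continuous_pi fun i => continuous_apply (i + m)

lemma shiftZ_mapsTo {A : Type*} [TopologicalSpace A] {X : Set (ℤ → A)}
    (hX : IsShiftSpace X) (m : ℤ) : MapsTo (shiftZ A m) X X := by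
  have h1 : MapsTo (shiftZ A 1) X X := by
    intro x hx
    have : shiftZ A 1 x ∈ shiftMap A '' X := ⟨x, hx, rfl⟩
    rwa [hX.2.2] at this
  have hneg : MapsTo (shiftZ A (-1)) X X := by
    intro x hx
    rw [← hX.2.2] at hx
    obtain ⟨y, hy, rfl⟩ := hx
    show shiftZ A (-1) (shiftZ A 1 y) ∈ X
    rw [shiftZ_shiftZ]; norm_num [shiftZ_zero]; exact hy
  induction m using Int.induction_on with
  | zero => intro x hx; rw [shiftZ_zero]; exact hx
  | succ k ih =>
    intro x hx
    have : shiftZ A ((k : ℤ) + 1) x = shiftZ A k (shiftZ A 1 x) := by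
      rw [shiftZ_shiftZ]
    rw [this]; exact ih (h1 hx)
  | pred k ih =>
    intro x hx
    have : shiftZ A (-(k : ℤ) - 1) x = shiftZ A (-k) (shiftZ A (-1) x) := by
      rw [shiftZ_shiftZ]; ring_nf
    rw [this]; exact ih (hneg hx)

lemma flip_shiftZ {A : Type*} [TopologicalSpace A] {X : Set (ℤ → A)}
    (hX : IsShiftSpace X) {φ : (ℤ → A) → ℤ → A} (hφ : IsFlip X φ) (m : ℤ) :
    ∀ x ∈ X, φ (shiftZ A m x) = shiftZ A (-m) (φ x) := by
  have h1 : ∀ x ∈ X, φ (shiftZ A 1 x) = shiftZ A (-1) (φ x) := hφ.2.2.2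
  have hneg : ∀ x ∈ X, φ (shiftZ A (-1) x) = shiftZ A 1 (φ x) := by
    intro x hx
    have hmem := shiftZ_mapsTo hX (-1) hx
    have := h1 _ hmem
    rw [shiftZ_shiftZ] at this
    norm_num [shiftZ_zero] at this
    rw [this, shiftZ_shiftZ]
    norm_num [shiftZ_zero]
  induction m using Int.induction_on with
  | zero => intro x hx; rw [shiftZ_zero]; norm_num [shiftZ_zero]
  | succ k ih =>
    intro x hx
    have e : shiftZ A ((k : ℤ) + 1) x = shiftZ A 1 (shiftZ A k x) := by
      rw [shiftZ_shiftZ]; ring_nf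
    rw [e, h1 _ (shiftZ_mapsTo hX k hx), ih x hx, shiftZ_shiftZ]
    ring_nf
  | pred k ih =>
    intro x hx
    have e : shiftZ A (-(k : ℤ) - 1) x = shiftZ A (-1) (shiftZ A (-k) x) := by
      rw [shiftZ_shiftZ]; ring_nf
    rw [e, hneg _ (shiftZ_mapsTo hX (-k) hx), ih x hx, shiftZ_shiftZ]
    ring_nf

lemma periodic_finite {A : Type*} [Fintype A] {d : ℤ} (hd : 0 < d) :
    {y : ℤ → A | ∀ i, y (i + d) = y i}.Finite := by
  have hinj : InjOn (fun y : ℤ → A => fun r : Fin d.toNat => y (r : ℤ))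
      {y : ℤ → A | ∀ i, y (i + d) = y i} := by
    intro y hy z hz h
    have key : ∀ w : ℤ → A, (∀ i, w (i + d) = w i) → ∀ q : ℤ, ∀ i : ℤ, w (i + q * d) = w i := by
      intro w hw q
      induction q using Int.induction_on with
      | zero => intro i; simp
      | succ k ih => intro i
                     have : i + ((k : ℤ) + 1) * d = (i + k * d) + d := by ring
                     rw [this, hw, ih]
      | pred k ih => intro i
                     have : i + (-(k : ℤ) - 1) * d + d = i + (-(k : ℤ)) * d := by ring
                     have h2 := hw (i + (-(k : ℤ) - 1) * d)
                     rw [this] at h2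
                     exact h2.symm.trans (ih i)
    funext i
    have hr1 : 0 ≤ i % d := Int.emod_nonneg i (by omega)
    have hr2 : i % d < d := Int.emod_lt_of_pos i hd
    have hi : i = i % d + (i / d) * d := by
      rw [Int.emod_add_ediv_mul i d]
    have hy' := key y hy (i / d) (i % d)
    have hz' := key z hz (i / d) (i % d)
    rw [hi, hy', hz']
    have hc := congrFun h (⟨(i % d).toNat, by omega⟩ : Fin d.toNat)
    simp only [Fin.val_mk] at hc
    rw [Int.toNat_of_nonneg hr1] at hc
    exact hc
  exact Set.Finite.of_finite_image (Set.toFinite _) hinj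

/-- Let `X` be a shift space and `φ` a flip for `(X, σ_X)`. Then every `σ_X^m ∘ φ`,
`m ∈ ℤ`, is a flip for `(X, σ_X)`; if `X` is infinite, these flips are pairwise
distinct (as maps of `X`); and `σ_X^m ∘ φ` and `σ_X^n ∘ φ` are conjugate whenever
`n - m` is even. -/
theorem shift_pow_comp_flip
    {A : Type*} [Fintype A] [TopologicalSpace A] [DiscreteTopology A]
    (X : Set (ℤ → A)) (hX : IsShiftSpace X)
    (φ : (ℤ → A) → ℤ → A) (hφ : IsFlip X φ) :
    (∀ m : ℤ, IsFlip X (shiftZ A m ∘ φ)) ∧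
    (X.Infinite → ∀ m n : ℤ, m ≠ n →
      ¬ Set.EqOn (shiftZ A m ∘ φ) (shiftZ A n ∘ φ) X) ∧
    (∀ m n : ℤ, Even (n - m) → FlipConj X (shiftZ A m ∘ φ) (shiftZ A n ∘ φ)) := by
  refine ⟨?_, ?_, ?_⟩
  · intro m
    refine ⟨(shiftZ_mapsTo hX m).comp hφ.1, ?_, ?_, ?_⟩
    · exact (shiftZ_continuous m).comp_continuousOn hφ.2.1
    · intro x hx
      show shiftZ A m (φ (shiftZ A m (φ x))) = x
      rw [flip_shiftZ hX hφ m (φ x) (hφ.1 hx), shiftZ_shiftZ, hφ.2.2.1 x hx]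
      norm_num [shiftZ_zero]
    · intro x hx
      show shiftZ A m (φ (shiftZ A 1 x)) = shiftZ A (-1) (shiftZ A m (φ x))
      rw [hφ.2.2.2 x hx]
      show shiftZ A m (shiftZ A (-1) (φ x)) = _
      rw [shiftZ_shiftZ, shiftZ_shiftZ]
      ring_nf
  · intro hInf m n hmn heq
    set d := n - m with hd
    have hd0 : d ≠ 0 := by omega
    have hper : ∀ y ∈ X, ∀ i : ℤ, y (i + d) = y i := by
      intro y hy i
      have hφy : φ y ∈ X := hφ.1 hy
      have h1 := heq hφy
      simp only [Function.comp_apply, hφ.2.2.1 y hy] at h1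
      have h2 := congrFun h1 (i - m)
      simp only [shiftZ] at h2
      have e1 : i - m + m = i := by ring
      have e2 : i - m + n = i + d := by omega
      rw [e1, e2] at h2
      exact h2.symm
    have hper' : ∀ y ∈ X, ∀ i : ℤ, y (i + |d|) = y i := by
      intro y hy i
      rcases abs_choice d with h | h
      · rw [h]; exact hper y hy i
      · rw [h]
        have := hper y hy (i + -d)
        have e : i + -d + d = i := by ring
        rw [e] at this
        exact this.symm
    have habs : 0 < |d| := abs_pos.mpr hd0
    have hfin : X.Finite := by
      refine (periodic_finite habs).subset ?_
      intro y hy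
      exact hper' y hy
    exact hInf hfin
  · intro m n hev
    obtain ⟨k, hk⟩ := hev
    refine ⟨shiftZ A k, shiftZ A (-k), shiftZ_mapsTo hX k, shiftZ_continuous k |>.continuousOn,
      shiftZ_mapsTo hX (-k), shiftZ_continuous (-k) |>.continuousOn, ⟨?_, ?_⟩, ?_, ?_⟩
    · intro x _; rw [shiftZ_shiftZ]; norm_num [shiftZ_zero]
    · intro x _; rw [shiftZ_shiftZ]; norm_num [shiftZ_zero]
    · intro x _
      show shiftZ A k (shiftZ A 1 x) = shiftZ A 1 (shiftZ A k x)
      rw [shiftZ_shiftZ, shiftZ_shiftZ]; ring_nf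
    · intro x hx
      show shiftZ A k (shiftZ A m (φ x)) = shiftZ A n (φ (shiftZ A k x))
      rw [flip_shiftZ hX hφ k x hx, shiftZ_shiftZ, shiftZ_shiftZ]
      have : k + m = n + -k := by omega
      rw [this]
end
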